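/- arXiv:1502.07730 — 17 statements merged into one kernel-verified Lean document; each statement's English description precedes it below -/
import Mathlib

section
/- Let n be a positive integer and let w_1 ≤ w_2 ≤ … ≤ w_m be a weighing sequence for n, with partial sums R_i = w_1 + … + w_i and R_0 = 0. Then for every i with 1 ≤ i ≤ m, one has w_i ≤ 2·R_{i−1} + 1. -/
/-- `w 0, w 1, …, w (m-1)` (1-indexed as `w_1 ≤ … ≤ w_m` in the paper) is a
weighing sequence for `n`: a nondecreasing list of `m` positive integers summing
to `n` such that every integer `1 ≤ k ≤ n` can be written as
`k = u_1 w_1 + … + u_m w_m` with each `u_i ∈ {-1, 0, 1}`. -/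
def IsWeighingSeq (n m : ℕ) (w : ℕ → ℕ) : Prop :=
  (∀ i, i < m → 0 < w i) ∧
  (∀ i j, i ≤ j → j < m → w i ≤ w j) ∧
  (∑ i ∈ Finset.range m, w i) = n ∧
  ∀ k : ℤ, 1 ≤ k → k ≤ (n : ℤ) →
    ∃ u : ℕ → ℤ, (∀ i, u i = -1 ∨ u i = 0 ∨ u i = 1) ∧
      k = ∑ i ∈ Finset.range m, u i * (w i : ℤ)

/-- For any weighing sequence, `w_i ≤ 2 * R_{i-1} + 1` where
`R_{i-1} = w_1 + … + w_{i-1}` (here `i` is 0-indexed, so `R_{i-1}` is the sum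
over `Finset.range i`). -/
theorem part_le_two_mul_prev_partial_sum_add_one (n m : ℕ) (w : ℕ → ℕ)
    (hn : 0 < n) (hw : IsWeighingSeq n m w) (i : ℕ) (hi : i < m) :
    w i ≤ 2 * (∑ j ∈ Finset.range i, w j) + 1 := by
  by_contra hcon
  push_neg at hcon
  obtain ⟨hpos, hmono, hsum, hrep⟩ := hw
  set R : ℤ := ∑ j ∈ Finset.range i, (w j : ℤ) with hR
  set W : ℤ := ∑ j ∈ Finset.Ico i m, (w j : ℤ) with hW
  have hRnonneg : 0 ≤ R := Finset.sum_nonneg (fun j _ => by positivity)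
  have hwi : (2 * R + 2 : ℤ) ≤ (w i : ℤ) := by
    have h2 : 2 * (∑ j ∈ Finset.range i, w j) + 2 ≤ w i := hcon
    have := (Nat.cast_le (α := ℤ)).2 h2
    push_cast at this
    simpa [hR] using this
  have hnRW : (n : ℤ) = R + W := by
    have : (∑ j ∈ Finset.range m, (w j : ℤ)) =
        (∑ j ∈ Finset.range i, (w j : ℤ)) + ∑ j ∈ Finset.Ico i m, (w j : ℤ) := by
      rw [Finset.range_eq_Ico, Finset.range_eq_Ico,
        Finset.sum_Ico_consecutive _ (Nat.zero_le i) hi.le]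
    rw [hR, hW, ← this, ← Nat.cast_sum, hsum]
  have hWi : (w i : ℤ) ≤ W := by
    apply Finset.single_le_sum (f := fun j => (w j : ℤ)) (fun j _ => by positivity)
    simp [Finset.mem_Ico, hi]
  set k : ℤ := W - R - 1 with hk
  have h1k : 1 ≤ k := by linarith
  have hkn : k ≤ (n : ℤ) := by rw [hnRW]; linarith
  obtain ⟨u, hu, hku⟩ := hrep k h1k hkn
  have hubd : ∀ j, -1 ≤ u j ∧ u j ≤ 1 := by
    intro j; rcases hu j with h | h | h <;> simp [h]
  have hsplit : k = (∑ j ∈ Finset.range i, u j * (w j : ℤ)) +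
      ∑ j ∈ Finset.Ico i m, u j * (w j : ℤ) := by
    rw [hku, Finset.range_eq_Ico, Finset.range_eq_Ico,
      Finset.sum_Ico_consecutive _ (Nat.zero_le i) hi.le]
  set A : ℤ := ∑ j ∈ Finset.range i, u j * (w j : ℤ) with hA
  set S : ℤ := ∑ j ∈ Finset.Ico i m, u j * (w j : ℤ) with hS
  have hA1 : -R ≤ A := by
    rw [hA, hR, ← Finset.sum_neg_distrib]
    apply Finset.sum_le_sum
    intro j _
    nlinarith [(hubd j).1, (hubd j).2, Int.natCast_nonneg (w j)]
  have hA2 : A ≤ R := by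
    rw [hA, hR]
    apply Finset.sum_le_sum
    intro j _
    nlinarith [(hubd j).1, (hubd j).2, Int.natCast_nonneg (w j)]
  have hS1 : W - 2 * R - 1 ≤ S := by
    have : S = k - A := by rw [hsplit]; ring
    rw [this, hk]; linarith
  have hS2 : S ≤ W - 1 := by
    have : S = k - A := by rw [hsplit]; ring
    rw [this, hk]; linarith
  -- There must be some j0 in Ico i m with u j0 ≠ 1, since S < W.
  by_cases hall : ∀ j ∈ Finset.Ico i m, u j = 1
  · have : S = W := by
      rw [hS, hW]
      exact Finset.sum_congr rfl (fun j hj => by rw [hall j hj, one_mul])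
    linarith
  · push_neg at hall
    obtain ⟨j0, hj0, hj0ne⟩ := hall
    have hj0le : u j0 ≤ 0 := by
      rcases hu j0 with h | h | h
      · simp [h]
      · simp [h]
      · exact absurd h hj0ne
    have hSle : S ≤ W - (w j0 : ℤ) := by
      have h1 : S = u j0 * (w j0 : ℤ) +
          ∑ j ∈ (Finset.Ico i m).erase j0, u j * (w j : ℤ) := by
        rw [hS, ← Finset.add_sum_erase _ _ hj0]
      have h2 : W = (w j0 : ℤ) +
          ∑ j ∈ (Finset.Ico i m).erase j0, (w j : ℤ) := by
        rw [hW, ← Finset.add_sum_erase _ _ hj0]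
      have h3 : ∑ j ∈ (Finset.Ico i m).erase j0, u j * (w j : ℤ) ≤
          ∑ j ∈ (Finset.Ico i m).erase j0, (w j : ℤ) := by
        apply Finset.sum_le_sum
        intro j _
        nlinarith [(hubd j).1, (hubd j).2, Int.natCast_nonneg (w j)]
      have h4 : u j0 * (w j0 : ℤ) ≤ 0 :=
        mul_nonpos_of_nonpos_of_nonneg hj0le (by positivity)
      linarith
    have hwj0 : (w i : ℤ) ≤ (w j0 : ℤ) := by
      have := hmono i j0 (Finset.mem_Ico.1 hj0).1 (Finset.mem_Ico.1 hj0).2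
      exact_mod_cast this
    linarith
end

section
/- Let n be a positive integer and let w_1 ≤ w_2 ≤ … ≤ w_m be a weighing sequence for n, with partial sums R_i = w_1 + … + w_i. Then for every i with 1 ≤ i ≤ m, one has 2·R_i ≥ 3·w_i − 1 (equivalently R_i ≥ (3w_i − 1)/2). -/
/-- For any weighing sequence, `2 * R_i ≥ 3 * w_i - 1` where
`R_i = w_1 + … + w_i` (here `i` is 0-indexed, so `R_i` is the sum over
`Finset.range (i+1)`). -/
theorem two_mul_partial_sum_ge (n m : ℕ) (w : ℕ → ℕ)
    (hn : 0 < n) (hw : IsWeighingSeq n m w) (i : ℕ) (hi : i < m) :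
    2 * ((∑ j ∈ Finset.range (i + 1), w j : ℕ) : ℤ) ≥ 3 * (w i : ℤ) - 1 := by
  obtain ⟨hpos, hmono, hsum, hrep⟩ := hw
  set R : ℤ := ∑ j ∈ Finset.range i, (w j : ℤ) with hR
  set W : ℤ := ∑ j ∈ Finset.Ico i m, (w j : ℤ) with hW
  have hRnn : 0 ≤ R := Finset.sum_nonneg fun j _ => by positivity
  have hWge : (w i : ℤ) ≤ W := by
    apply Finset.single_le_sum (f := fun j => (w j : ℤ)) (fun j _ => by positivity)
    simp [Finset.mem_Ico, hi]
  have hnRW : (n : ℤ) = R + W := by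
    rw [← hsum]
    push_cast
    rw [← Finset.sum_range_add_sum_Ico (fun j => (w j : ℤ)) (le_of_lt hi)]
  have hRi : ((∑ j ∈ Finset.range (i + 1), w j : ℕ) : ℤ) = R + (w i : ℤ) := by
    push_cast
    rw [Finset.sum_range_succ]
  rw [hRi]
  by_contra hcon
  push_neg at hcon
  have hwi : 2 * R + 2 ≤ (w i : ℤ) := by linarith
  obtain ⟨u, hu, hk⟩ := hrep (W - R - 1) (by linarith) (by linarith)
  set A : ℤ := ∑ j ∈ Finset.range i, u j * (w j : ℤ) with hA
  set S : ℤ := ∑ j ∈ Finset.Ico i m, u j * (w j : ℤ) with hS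
  have hsplit : W - R - 1 = A + S := by
    rw [hk, ← Finset.sum_range_add_sum_Ico (fun j => u j * (w j : ℤ)) (le_of_lt hi)]
  have hAle : A ≤ R := by
    apply Finset.sum_le_sum
    intro j _
    rcases hu j with h | h | h <;> simp [h] <;> positivity
  have hAge : -R ≤ A := by
    have h1 : ∑ j ∈ Finset.range i, (-(w j : ℤ)) ≤ A := by
      apply Finset.sum_le_sum
      intro j _
      rcases hu j with h | h | h <;> simp [h] <;> positivity
    have h2 : ∑ j ∈ Finset.range i, (-(w j : ℤ)) = -R := by
      rw [hR, ← Finset.sum_neg_distrib]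
    linarith
  by_cases hall : ∀ j ∈ Finset.Ico i m, u j = 1
  · have hSW : S = W := by
      rw [hS, hW]
      exact Finset.sum_congr rfl fun j hj => by rw [hall j hj, one_mul]
    linarith
  · push_neg at hall
    obtain ⟨j0, hj0, hne⟩ := hall
    have hj0le : u j0 ≤ 0 := by
      rcases hu j0 with h | h | h
      · simp [h]
      · simp [h]
      · exact absurd h hne
    have h1 : S = u j0 * (w j0 : ℤ) + ∑ j ∈ (Finset.Ico i m).erase j0, u j * (w j : ℤ) :=
      (Finset.add_sum_erase _ _ hj0).symm
    have h2 : ∑ j ∈ (Finset.Ico i m).erase j0, u j * (w j : ℤ) ≤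
        ∑ j ∈ (Finset.Ico i m).erase j0, (w j : ℤ) := by
      apply Finset.sum_le_sum
      intro j _
      rcases hu j with h | h | h <;> simp [h] <;> positivity
    have h3 : ∑ j ∈ (Finset.Ico i m).erase j0, (w j : ℤ) = W - (w j0 : ℤ) := by
      rw [hW, ← Finset.add_sum_erase _ _ hj0]
      ring
    have h4 : u j0 * (w j0 : ℤ) ≤ 0 :=
      mul_nonpos_of_nonpos_of_nonneg hj0le (by positivity)
    have hwj0 : (w i : ℤ) ≤ (w j0 : ℤ) := by
      obtain ⟨hij0, hj0m⟩ := Finset.mem_Ico.mp hj0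
      exact_mod_cast hmono i j0 hij0 hj0m
    linarith
end

section
/- Let n be a positive integer and let w_1 ≤ w_2 ≤ … ≤ w_m be a weighing sequence for n, with partial sums R_i = w_1 + … + w_i. Then for every i with 1 ≤ i ≤ m, one has 3·w_i ≤ 2·R_i + 1 (equivalently w_i ≤ (2R_i + 1)/3). -/
/-- For any weighing sequence, `3 * w_i ≤ 2 * R_i + 1` where
`R_i = w_1 + … + w_i` (here `i` is 0-indexed, so `R_i` is the sum over
`Finset.range (i+1)`). -/
theorem three_mul_part_le (n m : ℕ) (w : ℕ → ℕ)
    (hn : 0 < n) (hw : IsWeighingSeq n m w) (i : ℕ) (hi : i < m) :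
    3 * w i ≤ 2 * (∑ j ∈ Finset.range (i + 1), w j) + 1 := by
  obtain ⟨hpos, hmono, hsum, hrep⟩ := hw
  by_contra hcon
  push_neg at hcon
  -- split sums at i
  have hsplit : ∀ f : ℕ → ℤ,
      (∑ j ∈ Finset.range i, f j) + (∑ j ∈ Finset.Ico i m, f j)
        = ∑ j ∈ Finset.range m, f j := by
    intro f
    rw [Finset.range_eq_Ico, Finset.range_eq_Ico]
    exact Finset.sum_Ico_consecutive f (Nat.zero_le i) (le_of_lt hi)
  set R : ℤ := ∑ j ∈ Finset.range i, (w j : ℤ) with hRdef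
  set N : ℤ := ∑ j ∈ Finset.Ico i m, (w j : ℤ) with hNdef
  have hRN : R + N = (n : ℤ) := by
    rw [hRdef, hNdef, hsplit]
    exact_mod_cast congrArg (Nat.cast : ℕ → ℤ) hsum
  have hR0 : 0 ≤ R := Finset.sum_nonneg fun j _ => by positivity
  -- the gap hypothesis : w i ≥ 2R + 2
  have hgap : 2 * R + 2 ≤ (w i : ℤ) := by
    rw [Finset.sum_range_succ] at hcon
    have : 2 * (∑ j ∈ Finset.range i, w j) + 2 ≤ w i := by omega
    calc 2 * R + 2 = ((2 * (∑ j ∈ Finset.range i, w j) + 2 : ℕ) : ℤ) := by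
          push_cast [hRdef]; ring
      _ ≤ (w i : ℤ) := by exact_mod_cast this
  have hwiN : (w i : ℤ) ≤ N :=
    Finset.single_le_sum (f := fun j => (w j : ℤ)) (fun j _ => by positivity)
      (Finset.mem_Ico.mpr ⟨le_refl i, hi⟩)
  -- the key value
  obtain ⟨u, hu, hk⟩ := hrep (N - R - 1) (by linarith) (by linarith)
  set H : ℤ := ∑ j ∈ Finset.range i, u j * (w j : ℤ) with hHdef
  set T : ℤ := ∑ j ∈ Finset.Ico i m, u j * (w j : ℤ) with hTdef
  have hkHT : N - R - 1 = H + T := by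
    rw [hHdef, hTdef, hsplit]; exact hk
  have hHabs : |H| ≤ R := by
    calc |H| ≤ ∑ j ∈ Finset.range i, |u j * (w j : ℤ)| :=
          Finset.abs_sum_le_sum_abs _ _
      _ ≤ R := Finset.sum_le_sum fun j _ => by
          rcases hu j with h | h | h <;> simp [h, abs_mul]
  obtain ⟨hH1, hH2⟩ := abs_le.mp hHabs
  have hTub : T ≤ N - 1 := by linarith
  have hTlb : N - 2 * R - 1 ≤ T := by linarith
  -- some tail coefficient is not 1
  have hex : ∃ j ∈ Finset.Ico i m, u j ≠ 1 := by
    by_contra h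
    push_neg at h
    have : T = N := Finset.sum_congr rfl fun j hj => by rw [h j hj, one_mul]
    linarith
  obtain ⟨j0, hj0mem, hj0⟩ := hex
  obtain ⟨hj0i, hj0m⟩ := Finset.mem_Ico.mp hj0mem
  have hu0 : u j0 = -1 ∨ u j0 = 0 := by rcases hu j0 with h | h | h <;> tauto
  have hNT : N - T = ∑ j ∈ Finset.Ico i m, (1 - u j) * (w j : ℤ) := by
    rw [hNdef, hTdef, ← Finset.sum_sub_distrib]
    exact Finset.sum_congr rfl fun j _ => by ring
  have hsingle : (1 - u j0) * (w j0 : ℤ) ≤ N - T := by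
    rw [hNT]
    exact Finset.single_le_sum (f := fun j => (1 - u j) * (w j : ℤ))
      (fun j _ => by rcases hu j with h | h | h <;> simp [h] <;> positivity) hj0mem
  have hwj0 : (w i : ℤ) ≤ (w j0 : ℤ) := by exact_mod_cast hmono i j0 hj0i hj0m
  have hlb : (w j0 : ℤ) ≤ (1 - u j0) * (w j0 : ℤ) := by
    have h0 : (0 : ℤ) ≤ (w j0 : ℤ) := by positivity
    rcases hu0 with h | h <;> rw [h] <;> nlinarith
  linarith
end

section
/- Let n be a positive integer and let w_1 ≤ w_2 ≤ … ≤ w_m be a weighing sequence for n, with partial sums R_i = w_1 + … + w_i and R_0 = 0. Then for every i with 1 ≤ i ≤ m, one has R_i ≤ 3·R_{i−1} + 1. -/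
/-- For any weighing sequence, `R_i ≤ 3 * R_{i-1} + 1` (here `i` is 0-indexed:
`R_i` is the sum over `Finset.range (i+1)` and `R_{i-1}` over `Finset.range i`). -/
theorem partial_sum_le_three_mul_prev_add_one (n m : ℕ) (w : ℕ → ℕ)
    (hn : 0 < n) (hw : IsWeighingSeq n m w) (i : ℕ) (hi : i < m) :
    (∑ j ∈ Finset.range (i + 1), w j) ≤ 3 * (∑ j ∈ Finset.range i, w j) + 1 := by
  obtain ⟨hpos, hmono, hsum, hrep⟩ := hw
  by_contra hcon
  push_neg at hcon
  rw [Finset.sum_range_succ] at hcon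
  set R := ∑ j ∈ Finset.range i, w j with hR
  have hwi : 2 * R + 2 ≤ w i := by omega
  set M := ∑ j ∈ Finset.Ico i m, w j with hM
  have hRM : R + M = n := by
    rw [hR, hM, ← hsum, Finset.range_eq_Ico, Finset.range_eq_Ico,
      ← Finset.sum_Ico_consecutive w (Nat.zero_le i) hi.le]
  have hwiM : w i ≤ M :=
    Finset.single_le_sum (fun j _ => Nat.zero_le _)
      (Finset.mem_Ico.mpr ⟨le_refl i, hi⟩)
  have hn' : 3 * R + 2 ≤ n := by omega
  have hk1 : (1 : ℤ) ≤ (n : ℤ) - 2 * R - 1 := by omega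
  have hk2 : (n : ℤ) - 2 * R - 1 ≤ (n : ℤ) := by omega
  obtain ⟨u, hu, hk⟩ := hrep ((n : ℤ) - 2 * R - 1) hk1 hk2
  have hsplit : (n : ℤ) - 2 * R - 1 =
      (∑ j ∈ Finset.range i, u j * w j) + ∑ j ∈ Finset.Ico i m, u j * w j := by
    rw [hk, Finset.range_eq_Ico,
      ← Finset.sum_Ico_consecutive (fun j => u j * (w j : ℤ)) (Nat.zero_le i) hi.le,
      Finset.range_eq_Ico]
  set A := ∑ j ∈ Finset.range i, u j * (w j : ℤ) with hA
  set B := ∑ j ∈ Finset.Ico i m, u j * (w j : ℤ) with hB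
  have hterm : ∀ j, -(w j : ℤ) ≤ u j * w j ∧ u j * w j ≤ w j := by
    intro j
    rcases hu j with h | h | h <;>
      simp only [h, neg_one_mul, one_mul, zero_mul] <;> constructor <;> omega
  have hA1 : A ≤ (R : ℤ) := by
    rw [hA, hR, Nat.cast_sum]
    exact Finset.sum_le_sum fun j _ => (hterm j).2
  have hA2 : -(R : ℤ) ≤ A := by
    rw [hA, hR, Nat.cast_sum, ← Finset.sum_neg_distrib]
    exact Finset.sum_le_sum fun j _ => (hterm j).1
  have hBlt : B < (M : ℤ) := by
    have : B = ((n : ℤ) - 2 * R - 1) - A := by omega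
    have hnz : (n : ℤ) = (R : ℤ) + M := by exact_mod_cast hRM.symm
    omega
  have hBgt : (M : ℤ) - w i < B := by
    have : B = ((n : ℤ) - 2 * R - 1) - A := by omega
    have hnz : (n : ℤ) = (R : ℤ) + M := by exact_mod_cast hRM.symm
    have hwi' : (2 * R + 2 : ℤ) ≤ w i := by exact_mod_cast hwi
    omega
  by_cases hall : ∀ j ∈ Finset.Ico i m, u j = 1
  · have : B = (M : ℤ) := by
      rw [hB, hM, Nat.cast_sum]
      exact Finset.sum_congr rfl fun j hj => by rw [hall j hj, one_mul]
    omega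
  · push_neg at hall
    obtain ⟨j0, hj0, hj0ne⟩ := hall
    have hj0' := Finset.mem_Ico.mp hj0
    have hu0 : u j0 ≤ 0 := by rcases hu j0 with h | h | h <;> omega
    have hwj0 : w i ≤ w j0 := hmono i j0 hj0'.1 hj0'.2
    have hBle : B ≤ (M : ℤ) - w j0 := by
      rw [hB, ← Finset.add_sum_erase _ _ hj0]
      have h1 : u j0 * w j0 ≤ 0 :=
        mul_nonpos_of_nonpos_of_nonneg hu0 (by positivity)
      have h2 : (∑ j ∈ (Finset.Ico i m).erase j0, u j * (w j : ℤ)) ≤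
          ∑ j ∈ (Finset.Ico i m).erase j0, (w j : ℤ) := by
        exact Finset.sum_le_sum fun j _ => (hterm j).2
      have h3 : (∑ j ∈ (Finset.Ico i m).erase j0, (w j : ℤ)) = (M : ℤ) - w j0 := by
        rw [hM, Nat.cast_sum, ← Finset.add_sum_erase _ (fun j => (w j : ℤ)) hj0]
        ring
      linarith
    have : (w j0 : ℤ) ≥ w i := by exact_mod_cast hwj0
    omega
end

section
/- Let n be a positive integer and let w_1 ≤ w_2 ≤ … ≤ w_m be a weighing sequence for n, with partial sums R_i = w_1 + … + w_i and R_0 = 0. Then for every i with 1 ≤ i ≤ m, one has 3·R_{i−1} ≥ R_i − 1 (equivalently R_{i−1} ≥ (R_i − 1)/3). -/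
/-- For any weighing sequence, `3 * R_{i-1} ≥ R_i - 1` (here `i` is 0-indexed:
`R_i` is the sum over `Finset.range (i+1)` and `R_{i-1}` over `Finset.range i`). -/
theorem three_mul_prev_partial_sum_ge (n m : ℕ) (w : ℕ → ℕ)
    (hn : 0 < n) (hw : IsWeighingSeq n m w) (i : ℕ) (hi : i < m) :
    3 * ((∑ j ∈ Finset.range i, w j : ℕ) : ℤ) ≥
      ((∑ j ∈ Finset.range (i + 1), w j : ℕ) : ℤ) - 1 := by
  obtain ⟨hpos, hmono, hsum, hrep⟩ := hw
  by_contra hcon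
  push_neg at hcon
  set R : ℤ := ((∑ j ∈ Finset.range i, w j : ℕ) : ℤ) with hRdef
  set T : ℤ := ∑ j ∈ Finset.Ico i m, (w j : ℤ) with hTdef
  have hRnn : 0 ≤ R := by positivity
  have hsplit : R + T = (n : ℤ) := by
    rw [hRdef, hTdef, ← hsum]
    push_cast
    exact Finset.sum_range_add_sum_Ico _ hi.le
  have hRS : ((∑ j ∈ Finset.range (i + 1), w j : ℕ) : ℤ) = R + (w i : ℤ) := by
    rw [hRdef]; push_cast [Finset.sum_range_succ]; ring
  have hwi : 2 * R + 2 ≤ (w i : ℤ) := by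
    rw [hRS] at hcon; linarith
  have hiIco : i ∈ Finset.Ico i m := Finset.mem_Ico.mpr ⟨le_rfl, hi⟩
  have hTwi : (w i : ℤ) ≤ T := by
    rw [hTdef]
    exact Finset.single_le_sum (f := fun j => (w j : ℤ)) (fun j _ => Int.natCast_nonneg _) hiIco
  set k : ℤ := T - R - 1 with hkdef
  obtain ⟨u, hu, hk⟩ := hrep k (by linarith) (by linarith)
  have hbound : ∀ j, -(w j : ℤ) ≤ u j * (w j : ℤ) ∧ u j * (w j : ℤ) ≤ (w j : ℤ) := by
    intro j
    have hwj : (0 : ℤ) ≤ (w j : ℤ) := Int.natCast_nonneg _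
    rcases hu j with h | h | h <;> rw [h] <;> constructor <;> linarith
  set A : ℤ := ∑ j ∈ Finset.range i, u j * (w j : ℤ) with hAdef
  set B : ℤ := ∑ j ∈ Finset.Ico i m, u j * (w j : ℤ) with hBdef
  have hkAB : k = A + B := by
    rw [hk, hAdef, hBdef, Finset.sum_range_add_sum_Ico _ hi.le]
  have hA1 : -R ≤ A := by
    rw [hAdef, hRdef]
    push_cast
    calc -(∑ j ∈ Finset.range i, (w j : ℤ)) = ∑ j ∈ Finset.range i, -(w j : ℤ) := by
          rw [Finset.sum_neg_distrib]
      _ ≤ _ := Finset.sum_le_sum (fun j _ => (hbound j).1)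
  have hA2 : A ≤ R := by
    rw [hAdef, hRdef]
    push_cast
    exact Finset.sum_le_sum (fun j _ => (hbound j).2)
  by_cases hall : ∀ j ∈ Finset.Ico i m, u j = 1
  · have hBT : B = T := by
      rw [hBdef, hTdef]
      exact Finset.sum_congr rfl (fun j hj => by rw [hall j hj, one_mul])
    have : A = -R - 1 := by rw [hkdef] at hkAB; linarith [hBT]
    linarith
  · push_neg at hall
    obtain ⟨j0, hj0m, hj0⟩ := hall
    have hj0le : u j0 ≤ 0 := by
      rcases hu j0 with h | h | h
      · rw [h]; norm_num
      · rw [h]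
      · exact absurd h hj0
    have hTB : T - B = ∑ j ∈ Finset.Ico i m, (1 - u j) * (w j : ℤ) := by
      rw [hTdef, hBdef, ← Finset.sum_sub_distrib]
      exact Finset.sum_congr rfl (fun j _ => by ring)
    have hterm : ∀ j ∈ Finset.Ico i m, (0 : ℤ) ≤ (1 - u j) * (w j : ℤ) := by
      intro j _
      have hwj : (0 : ℤ) ≤ (w j : ℤ) := Int.natCast_nonneg _
      have : (0 : ℤ) ≤ 1 - u j := by
        rcases hu j with h | h | h <;> rw [h] <;> norm_num
      positivity
    have hsingle : (1 - u j0) * (w j0 : ℤ) ≤ T - B := by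
      rw [hTB]
      exact Finset.single_le_sum hterm hj0m
    have hw0 : (w j0 : ℤ) ≤ (1 - u j0) * (w j0 : ℤ) := by
      have hwj : (0 : ℤ) ≤ (w j0 : ℤ) := Int.natCast_nonneg _
      nlinarith
    have hij0 : (w i : ℤ) ≤ (w j0 : ℤ) := by
      obtain ⟨h1, h2⟩ := Finset.mem_Ico.mp hj0m
      exact_mod_cast hmono i j0 h1 h2
    -- B = k - A ≥ T - 2R - 1, but T - B ≥ w j0 ≥ w i ≥ 2R + 2
    have hBlow : T - 2 * R - 1 ≤ B := by
      rw [hkdef] at hkAB; linarith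
    linarith
end

section
/- Let n be a positive integer and let w_1 ≤ w_2 ≤ … ≤ w_m be a weighing sequence for n. Then for every i with 1 ≤ i ≤ m, the i-th part satisfies w_i ≤ 3^{i−1}. -/
lemma key_bound (n m : ℕ) (w : ℕ → ℕ)
    (hw : IsWeighingSeq n m w) (i : ℕ) (hi : i < m) :
    w i ≤ 2 * (∑ j ∈ Finset.range i, w j) + 1 := by
  obtain ⟨hpos, hmono, hsum, hrep⟩ := hw
  set S : ℕ := ∑ j ∈ Finset.range i, w j with hS
  by_cases hcase : w i ≤ S
  · omega
  push_neg at hcase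
  have hwn : w i ≤ n := by
    rw [← hsum]
    exact Finset.single_le_sum (fun j _ => Nat.zero_le _) (Finset.mem_range.mpr hi)
  set k : ℤ := (n : ℤ) - w i + 1 with hkdef
  have hk1 : 1 ≤ k := by
    have h1 : (w i : ℤ) ≤ n := by exact_mod_cast hwn
    have h2 : (0 : ℤ) ≤ S := Int.natCast_nonneg S
    simp only [hkdef]; linarith
  have hk2 : k ≤ (n : ℤ) := by
    have h1 : (1 : ℤ) ≤ w i := by exact_mod_cast hpos i hi
    simp only [hkdef]; linarith
  obtain ⟨u, hu, hk⟩ := hrep k hk1 hk2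
  have hsplit : ∀ f : ℕ → ℤ, ∑ j ∈ Finset.range m, f j =
      (∑ j ∈ Finset.range i, f j) + f i + ∑ j ∈ Finset.Ico (i+1) m, f j := by
    intro f
    rw [Finset.range_eq_Ico, ← Finset.sum_Ico_consecutive f (Nat.zero_le (i+1)) hi,
      ← Finset.range_eq_Ico, Finset.sum_range_succ]
  set A : ℤ := ∑ j ∈ Finset.range i, u j * w j with hA
  set B : ℤ := ∑ j ∈ Finset.Ico (i+1) m, u j * w j with hB
  set W' : ℤ := ∑ j ∈ Finset.Ico (i+1) m, (w j : ℤ) with hW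
  have hn' : (n : ℤ) = (S : ℤ) + w i + W' := by
    have h1 : ((∑ j ∈ Finset.range m, w j : ℕ) : ℤ) = ∑ j ∈ Finset.range m, (w j : ℤ) :=
      Nat.cast_sum _ _
    have h2 := hsplit (fun j => (w j : ℤ))
    rw [hsum] at h1
    rw [h1, h2]
    push_cast [hS]
    ring
  have hkeq : k = A + u i * w i + B := by rw [hk, hsplit]
  have hA1 : A ≤ (S : ℤ) := by
    rw [hA, hS]
    push_cast
    apply Finset.sum_le_sum
    intro j _
    rcases hu j with h | h | h <;> simp [h] <;> omega
  have hA2 : -(S : ℤ) ≤ A := by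
    rw [hA, hS]
    push_cast
    rw [← Finset.sum_neg_distrib]
    apply Finset.sum_le_sum
    intro j _
    rcases hu j with h | h | h <;> simp [h] <;> omega
  have hWB : W' - B = ∑ j ∈ Finset.Ico (i+1) m, (1 - u j) * w j := by
    rw [hW, hB, ← Finset.sum_sub_distrib]
    apply Finset.sum_congr rfl
    intro j _
    ring
  have hWBnn : 0 ≤ W' - B := by
    rw [hWB]
    apply Finset.sum_nonneg
    intro j _
    have hj := hu j
    have : (0:ℤ) ≤ w j := Int.natCast_nonneg _
    rcases hj with h | h | h <;> simp [h] <;> omega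
  have hmain : u i * w i = (W' - B) + ((S : ℤ) + 1 - A) := by
    have := hkeq
    rw [hkdef, hn'] at this
    linarith
  have hwipos : (0 : ℤ) < w i := by exact_mod_cast hpos i hi
  have hui : u i = 1 := by
    rcases hu i with h | h | h
    · exfalso; rw [h] at hmain; linarith
    · exfalso; rw [h] at hmain; linarith
    · exact h
  rw [hui, one_mul] at hmain
  by_cases hall : ∀ j ∈ Finset.Ico (i+1) m, u j = 1
  · have h0 : W' - B = 0 := by
      rw [hWB]
      apply Finset.sum_eq_zero
      intro j hj
      rw [hall j hj]
      ring
    rw [h0] at hmain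
    have : (w i : ℤ) ≤ 2 * S + 1 := by linarith
    exact_mod_cast this
  · exfalso
    push_neg at hall
    obtain ⟨j, hjmem, hjne⟩ := hall
    have hij : i ≤ j := by
      have := (Finset.mem_Ico.mp hjmem).1; omega
    have hjm : j < m := (Finset.mem_Ico.mp hjmem).2
    have hwij : (w i : ℤ) ≤ w j := by exact_mod_cast hmono i j hij hjm
    have hterm : (w i : ℤ) ≤ (1 - u j) * w j := by
      have hjnonneg : (0:ℤ) ≤ w j := Int.natCast_nonneg _
      rcases hu j with h | h | h
      · rw [h]; linarith
      · rw [h]; linarith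
      · exact absurd h hjne
    have hsumge : (1 - u j) * w j ≤ W' - B := by
      rw [hWB]
      apply Finset.single_le_sum (f := fun j => (1 - u j) * (w j : ℤ)) _ hjmem
      intro l _
      have : (0:ℤ) ≤ w l := Int.natCast_nonneg _
      rcases hu l with h | h | h <;> simp [h] <;> omega
    linarith

/-- For any weighing sequence, the `i`-th part satisfies `w_i ≤ 3 ^ (i - 1)`
(here `i` is 0-indexed, so the bound reads `w i ≤ 3 ^ i`). -/
theorem part_le_three_pow (n m : ℕ) (w : ℕ → ℕ)
    (hn : 0 < n) (hw : IsWeighingSeq n m w) (i : ℕ) (hi : i < m) :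
    w i ≤ 3 ^ i := by
  have key : ∀ j, j < m → w j ≤ 2 * (∑ l ∈ Finset.range j, w l) + 1 :=
    fun j hj => key_bound n m w hw j hj
  have bound : ∀ j, j ≤ m → 2 * (∑ l ∈ Finset.range j, w l) + 1 ≤ 3 ^ j := by
    intro j
    induction j with
    | zero => simp
    | succ j ih =>
      intro h
      have h1 := ih (Nat.le_of_succ_le h)
      have h2 := key j (Nat.lt_of_succ_le h)
      rw [Finset.sum_range_succ, pow_succ]
      set t := 3 ^ j
      omega
  calc w i ≤ 2 * (∑ l ∈ Finset.range i, w l) + 1 := key i hi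
    _ ≤ 3 ^ i := bound i (Nat.le_of_lt hi)
end

section
/- Let n be a positive integer and let w_1 ≤ w_2 ≤ … ≤ w_m be a weighing sequence for n, with partial sums R_i = w_1 + … + w_i. Then for every i with 1 ≤ i ≤ m, one has R_i ≤ (3^i − 1)/2. In particular n = R_m ≤ (3^m − 1)/2, i.e., 2n ≤ 3^m − 1. -/
/-- Key lemma: each weight is at most twice the sum of the previous ones plus 1. -/
lemma weight_le_key (n m : ℕ) (w : ℕ → ℕ) (hw : IsWeighingSeq n m w) :
    ∀ j, j < m → w j ≤ 2 * (∑ t ∈ Finset.range j, w t) + 1 := by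
  obtain ⟨hpos, hmono, hsum, hrep⟩ := hw
  intro j hj
  by_contra hcon
  push_neg at hcon
  set R : ℕ := ∑ t ∈ Finset.range j, w t with hR
  set TS : ℕ := ∑ t ∈ Finset.Ico j m, w t with hTS
  have hsplit : R + TS = n := by
    rw [hR, hTS, Finset.range_eq_Ico, ← hsum, Finset.range_eq_Ico]
    exact Finset.sum_Ico_consecutive _ (Nat.zero_le j) hj.le
  have hTSge : w j ≤ TS :=
    Finset.single_le_sum (f := w) (fun t _ => Nat.zero_le _)
      (Finset.mem_Ico.mpr ⟨le_refl j, hj⟩)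
  have hk1 : (1 : ℤ) ≤ (n : ℤ) - 2 * (R : ℤ) - 1 := by omega
  have hk2 : (n : ℤ) - 2 * (R : ℤ) - 1 ≤ (n : ℤ) := by omega
  obtain ⟨u, hu, hk⟩ := hrep ((n : ℤ) - 2 * (R : ℤ) - 1) hk1 hk2
  have hsplit2 : (∑ i ∈ Finset.range m, u i * (w i : ℤ)) =
      (∑ i ∈ Finset.range j, u i * (w i : ℤ)) +
        ∑ i ∈ Finset.Ico j m, u i * (w i : ℤ) := by
    rw [Finset.range_eq_Ico, Finset.range_eq_Ico]
    exact (Finset.sum_Ico_consecutive (f := fun i => u i * (w i : ℤ)) (Nat.zero_le j) hj.le).symm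
  set S : ℤ := ∑ i ∈ Finset.range j, u i * (w i : ℤ) with hS
  set T : ℤ := ∑ i ∈ Finset.Ico j m, u i * (w i : ℤ) with hT
  have hub : ∀ i, u i * (w i : ℤ) ≤ (w i : ℤ) := by
    intro i
    rcases hu i with h | h | h <;> rw [h] <;> simp
  have hlb : ∀ i, -(w i : ℤ) ≤ u i * (w i : ℤ) := by
    intro i
    rcases hu i with h | h | h <;> rw [h] <;> simp
  have hScastR : (∑ i ∈ Finset.range j, (w i : ℤ)) = (R : ℤ) := by
    rw [hR]; push_cast; ring
  have hScastT : (∑ i ∈ Finset.Ico j m, (w i : ℤ)) = (TS : ℤ) := by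
    rw [hTS]; push_cast; ring
  have hSub : S ≤ (R : ℤ) := by
    rw [hS, ← hScastR]
    exact Finset.sum_le_sum fun i _ => hub i
  have hSlb : -(R : ℤ) ≤ S := by
    rw [hS, ← hScastR, ← Finset.sum_neg_distrib]
    exact Finset.sum_le_sum fun i _ => hlb i
  have hkST : (n : ℤ) - 2 * (R : ℤ) - 1 = S + T := by
    rw [hk, hsplit2]
  -- T < TS, so some tail coefficient is ≤ 0
  have hTub : T < (TS : ℤ) := by omega
  have hex : ∃ t0 ∈ Finset.Ico j m, u t0 ≠ 1 := by
    by_contra hall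
    push_neg at hall
    have : T = (TS : ℤ) := by
      rw [hT, ← hScastT]
      exact Finset.sum_congr rfl fun t ht => by rw [hall t ht, one_mul]
    omega
  obtain ⟨t0, ht0, hu0⟩ := hex
  have hu0' : u t0 ≤ 0 := by rcases hu t0 with h | h | h <;> omega
  have hT_le : T ≤ (TS : ℤ) - (w t0 : ℤ) := by
    have h1 : (∑ i ∈ (Finset.Ico j m).erase t0, u i * (w i : ℤ)) + u t0 * (w t0 : ℤ) = T :=
      Finset.sum_erase_add _ _ ht0
    have h2 : (∑ i ∈ (Finset.Ico j m).erase t0, (w i : ℤ)) + (w t0 : ℤ) = (TS : ℤ) := by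
      rw [← hScastT]; exact Finset.sum_erase_add _ _ ht0
    have h3 : (∑ i ∈ (Finset.Ico j m).erase t0, u i * (w i : ℤ)) ≤
        ∑ i ∈ (Finset.Ico j m).erase t0, (w i : ℤ) :=
      Finset.sum_le_sum fun i _ => hub i
    have h4 : u t0 * (w t0 : ℤ) ≤ 0 :=
      mul_nonpos_of_nonpos_of_nonneg hu0' (by positivity)
    linarith
  have hwt0 : w j ≤ w t0 :=
    hmono j t0 (Finset.mem_Ico.mp ht0).1 (Finset.mem_Ico.mp ht0).2
  -- lower bound on T
  have hT_lb : (TS : ℤ) - 2 * (R : ℤ) - 1 ≤ T := by omega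
  omega

/-- For any weighing sequence, `R_i ≤ (3 ^ i - 1) / 2` for every `1 ≤ i ≤ m`
(stated as `2 * R_i ≤ 3 ^ i - 1`); in particular `2 * n ≤ 3 ^ m - 1`. -/
theorem partial_sum_le_and_two_mul_le (n m : ℕ) (w : ℕ → ℕ)
    (hn : 0 < n) (hw : IsWeighingSeq n m w) :
    (∀ i, 1 ≤ i → i ≤ m → 2 * (∑ j ∈ Finset.range i, w j) ≤ 3 ^ i - 1) ∧
      2 * n ≤ 3 ^ m - 1 := by
  have key := weight_le_key n m w hw
  have main : ∀ i, i ≤ m → 2 * (∑ j ∈ Finset.range i, w j) + 1 ≤ 3 ^ i := by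
    intro i
    induction i with
    | zero => simp
    | succ i ih =>
      intro him
      have h1 := ih (Nat.le_of_succ_le him)
      have h2 := key i (Nat.lt_of_succ_le him)
      rw [Finset.sum_range_succ, pow_succ]
      omega
  constructor
  · intro i _ him
    have := main i him
    omega
  · have := main m le_rfl
    rw [hw.2.2.1] at this
    omega
end

section
/- For every positive integer m, the list 3^0, 3^1, …, 3^{m−1} is a weighing sequence for n = (3^m − 1)/2; that is, every integer k with 1 ≤ k ≤ (3^m − 1)/2 can be written as k = u_1·3^0 + u_2·3^1 + … + u_m·3^{m−1} with each u_i ∈ {−1, 0, 1}. -/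
lemma balanced_ternary : ∀ m : ℕ, ∀ k : ℤ, -(3 ^ m - 1) ≤ 2 * k → 2 * k ≤ 3 ^ m - 1 →
    ∃ u : ℕ → ℤ, (∀ i, u i = -1 ∨ u i = 0 ∨ u i = 1) ∧
      k = ∑ i ∈ Finset.range m, u i * 3 ^ i := by
  intro m
  induction m with
  | zero =>
    intro k h1 h2
    refine ⟨fun _ => 0, fun i => Or.inr (Or.inl rfl), ?_⟩
    simp; omega
  | succ m ih =>
    intro k h1 h2
    have hP : (1 : ℤ) ≤ 3 ^ m := one_le_pow₀ (by norm_num)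
    have hPodd : (3 : ℤ) ^ m % 2 = 1 := Int.odd_iff.mp (Odd.pow ⟨1, by ring⟩)
    have hpow : (3 : ℤ) ^ (m + 1) = 3 * 3 ^ m := by ring
    rw [hpow] at h1 h2
    set c : ℤ := if k % 3 = 2 then -1 else k % 3 with hc
    have hk3 : 0 ≤ k % 3 ∧ k % 3 < 3 ∧ 3 * (k / 3) + k % 3 = k := by
      refine ⟨Int.emod_nonneg k (by norm_num), Int.emod_lt_of_pos k (by norm_num),
        by rw [Int.mul_ediv_add_emod]⟩
    have hcval : c = -1 ∨ c = 0 ∨ c = 1 := by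
      rw [hc]; split <;> omega
    set k' : ℤ := (k - c) / 3 with hk'
    have hkc : k = 3 * k' + c := by
      rw [hk']
      have h3 : (3 : ℤ) ∣ (k - c) := by
        rw [hc]; split
        · omega
        · exact ⟨k / 3, by omega⟩
      obtain ⟨t, ht⟩ := h3
      rw [ht, Int.mul_ediv_cancel_left t (by norm_num)]
      omega
    have hb1 : -(3 ^ m - 1) ≤ 2 * k' := by omega
    have hb2 : 2 * k' ≤ 3 ^ m - 1 := by omega
    obtain ⟨u', hu', hrep⟩ := ih k' hb1 hb2
    refine ⟨fun i => if i = 0 then c else u' (i - 1), ?_, ?_⟩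
    · intro i
      by_cases h : i = 0
      · simpa [h] using hcval
      · simpa [h] using hu' (i - 1)
    · rw [Finset.sum_range_succ']
      simp only [Nat.add_sub_cancel]
      have hcong : ∀ i ∈ Finset.range m,
          (if i + 1 = 0 then c else u' i) * 3 ^ (i + 1) = 3 * (u' i * 3 ^ i) :=
        fun i _ => by rw [if_neg i.succ_ne_zero]; ring
      rw [Finset.sum_congr rfl hcong, ← Finset.mul_sum, ← hrep, hkc]
      norm_num

lemma geom_sum_three (m : ℕ) : 2 * ∑ i ∈ Finset.range m, 3 ^ i = 3 ^ m - 1 := by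
  induction m with
  | zero => simp
  | succ m ih =>
    rw [Finset.sum_range_succ, Nat.mul_add, ih, pow_succ]
    have : 1 ≤ 3 ^ m := Nat.one_le_pow _ _ (by norm_num)
    omega

/-- For every positive `m`, the list `3^0, 3^1, …, 3^(m-1)` is a weighing
sequence for `n = (3^m - 1) / 2`: every `1 ≤ k ≤ (3^m - 1)/2` is representable
as `k = u_1·3^0 + … + u_m·3^(m-1)` with `u_i ∈ {-1, 0, 1}`. -/
theorem powers_of_three_isWeighingSeq (m : ℕ) (hm : 0 < m) :
    IsWeighingSeq ((3 ^ m - 1) / 2) m (fun i => 3 ^ i) := by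
  have hgs := geom_sum_three m
  have hpow1 : 1 ≤ 3 ^ m := Nat.one_le_pow _ _ (by norm_num)
  have hnum : 2 * ((3 ^ m - 1) / 2) = 3 ^ m - 1 := by omega
  have hcast : (2 : ℤ) * (((3 ^ m - 1) / 2 : ℕ) : ℤ) = 3 ^ m - 1 := by
    have h := congrArg (Nat.cast : ℕ → ℤ) hnum
    rw [Nat.cast_mul, Nat.cast_sub hpow1] at h
    push_cast at h ⊢
    linarith
  refine ⟨fun i _ => pow_pos (by norm_num) i, ?_, ?_, ?_⟩
  · intro i j hij _
    exact Nat.pow_le_pow_right (by norm_num) hij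
  · simp only []
    omega
  · intro k hk1 hk2
    have hPi : (1 : ℤ) ≤ 3 ^ m := one_le_pow₀ (by norm_num)
    obtain ⟨u, hu, hrep⟩ := balanced_ternary m k (by linarith) (by linarith)
    exact ⟨u, hu, by simpa using hrep⟩
end

section
/- Let m be a positive integer and let n be an integer with (3^{m−1} + 1)/2 ≤ n ≤ (3^m − 1)/2. Then every weighing sequence for n has at least m parts. -/
/-- If `(3^(m-1) + 1) / 2 ≤ n ≤ (3^m - 1) / 2` (stated doubled, exactly
equivalently, as `3^(m-1) + 1 ≤ 2n ≤ 3^m - 1`), then every weighing sequence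
for `n` has at least `m` parts. -/
theorem length_ge_of_mem_range (m n : ℕ) (hm : 0 < m)
    (h1 : 3 ^ (m - 1) + 1 ≤ 2 * n) (h2 : 2 * n ≤ 3 ^ m - 1) :
    ∀ (m' : ℕ) (w : ℕ → ℕ), IsWeighingSeq n m' w → m ≤ m' := by
  intro m' w hw
  obtain ⟨hpos, hmono, hsum, hrep⟩ := hw
  classical
  -- every k ∈ [-n, n] is representable
  have hall : ∀ k : ℤ, ∃ u : ℕ → ℤ, (∀ i, u i = -1 ∨ u i = 0 ∨ u i = 1) ∧
      (-(n : ℤ) ≤ k → k ≤ (n : ℤ) →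
        k = ∑ i ∈ Finset.range m', u i * (w i : ℤ)) := by
    intro k
    rcases lt_trichotomy k 0 with h | h | h
    · by_cases hk : -(n : ℤ) ≤ k
      · obtain ⟨u, hu1, hu2⟩ := hrep (-k) (by omega) (by omega)
        refine ⟨fun i => -u i, fun i => by rcases hu1 i with h | h | h <;> simp [h], ?_⟩
        intro _ _
        have : -k = ∑ i ∈ Finset.range m', u i * (w i : ℤ) := hu2
        simp [neg_mul]
        linarith [this]
      · exact ⟨fun _ => 0, fun _ => Or.inr (Or.inl rfl), fun h' _ => absurd h' hk⟩
    · exact ⟨fun _ => 0, fun _ => Or.inr (Or.inl rfl), fun _ _ => by simp [h]⟩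
    · by_cases hk : k ≤ (n : ℤ)
      · obtain ⟨u, hu1, hu2⟩ := hrep k (by omega) hk
        exact ⟨u, hu1, fun _ _ => hu2⟩
      · exact ⟨fun _ => 0, fun _ => Or.inr (Or.inl rfl), fun _ h' => absurd h' hk⟩
  choose F hF1 hF2 using hall
  have key : 2 * n + 1 ≤ 3 ^ m' := by
    have hinj : Set.InjOn (fun k : ℤ => fun i : Fin m' => F k i)
        (Finset.Icc (-(n : ℤ)) n) := by
      intro a ha b hb hab
      simp only [Finset.coe_Icc, Set.mem_Icc] at ha hb
      have hsa := hF2 a ha.1 ha.2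
      have hsb := hF2 b hb.1 hb.2
      have : ∑ i ∈ Finset.range m', F a i * (w i : ℤ)
          = ∑ i ∈ Finset.range m', F b i * (w i : ℤ) := by
        apply Finset.sum_congr rfl
        intro i hi
        have := congrFun hab ⟨i, Finset.mem_range.mp hi⟩
        simp only at this
        rw [this]
      omega
    have hmaps : ∀ k ∈ Finset.Icc (-(n : ℤ)) n,
        (fun i : Fin m' => F k i) ∈
          Fintype.piFinset (fun _ : Fin m' => ({-1, 0, 1} : Finset ℤ)) := by
      intro k _
      rw [Fintype.mem_piFinset]
      intro i
      rcases hF1 k i with h | h | h <;> simp [h]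
    have := Finset.card_le_card_of_injOn _ hmaps hinj
    rw [Fintype.card_piFinset] at this
    simp only [Int.card_Icc] at this
    have hc : ((n : ℤ) + 1 - -(n : ℤ)).toNat = 2 * n + 1 := by omega
    rw [hc] at this
    simpa using this
  -- conclude
  have h3 : (3 : ℕ) ^ (m - 1) < 3 ^ m' := by omega
  have := (Nat.pow_lt_pow_iff_right (by norm_num : 1 < 3)).mp h3
  omega
end

section
/- Let m be a positive integer and let n be an integer with (3^{m−1} + 1)/2 ≤ n ≤ (3^m − 1)/2. Then there exists a weighing sequence for n having exactly m parts; consequently the minimal length of a weighing sequence for n (the length of every feasible partition of n) equals m. -/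
/-- Strengthened notion: a "good" sequence, with the complete-sequence style
condition `w i ≤ 2 * (sum of previous) + 1`. -/
def GoodSeq (n m : ℕ) (w : ℕ → ℕ) : Prop :=
  (∀ i, i < m → 0 < w i) ∧
  (∀ i j, i ≤ j → j < m → w i ≤ w j) ∧
  (∑ i ∈ Finset.range m, w i) = n ∧
  ∀ i, i < m → w i ≤ 2 * (∑ j ∈ Finset.range i, w j) + 1

lemma good_rep (w : ℕ → ℕ) (m : ℕ)
    (hb : ∀ i, i < m → w i ≤ 2 * (∑ j ∈ Finset.range i, w j) + 1) :
    ∀ k : ℤ, -(∑ i ∈ Finset.range m, (w i : ℤ)) ≤ k →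
      k ≤ ∑ i ∈ Finset.range m, (w i : ℤ) →
      ∃ u : ℕ → ℤ, (∀ i, u i = -1 ∨ u i = 0 ∨ u i = 1) ∧
        k = ∑ i ∈ Finset.range m, u i * (w i : ℤ) := by
  induction m with
  | zero =>
    intro k hk1 hk2
    refine ⟨fun _ => 0, fun i => Or.inr (Or.inl rfl), ?_⟩
    simp at hk1 hk2 ⊢
    omega
  | succ m ih =>
    intro k hk1 hk2
    set S : ℤ := ∑ i ∈ Finset.range m, (w i : ℤ) with hS
    have hbm : (w m : ℤ) ≤ 2 * S + 1 := by
      have := hb m (Nat.lt_succ_self m)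
      have : (w m : ℤ) ≤ 2 * (∑ j ∈ Finset.range m, (w j : ℤ)) + 1 := by
        exact_mod_cast this
      simpa [hS] using this
    rw [Finset.sum_range_succ] at hk1 hk2
    -- choose coefficient c for position m
    obtain ⟨c, hc, hcb1, hcb2⟩ :
        ∃ c : ℤ, (c = -1 ∨ c = 0 ∨ c = 1) ∧ -S ≤ k - c * w m ∧ k - c * w m ≤ S := by
      by_cases h1 : S < k
      · exact ⟨1, Or.inr (Or.inr rfl), by omega, by omega⟩
      · by_cases h2 : k < -S
        · exact ⟨-1, Or.inl rfl, by omega, by omega⟩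
        · exact ⟨0, Or.inr (Or.inl rfl), by omega, by omega⟩
    obtain ⟨u', hu'1, hu'2⟩ := ih (fun i hi => hb i (hi.trans (Nat.lt_succ_self m)))
      (k - c * w m) hcb1 hcb2
    refine ⟨fun i => if i = m then c else u' i, ?_, ?_⟩
    · intro i
      by_cases h : i = m <;> simp [h, hc, hu'1 i]
    · rw [Finset.sum_range_succ]
      have : ∑ i ∈ Finset.range m, (if i = m then c else u' i) * (w i : ℤ)
          = ∑ i ∈ Finset.range m, u' i * (w i : ℤ) := by
        apply Finset.sum_congr rfl
        intro i hi
        have : i ≠ m := Nat.ne_of_lt (Finset.mem_range.mp hi)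
        simp [this]
      have hcm : (fun i => if i = m then c else u' i) m = c := by simp
      rw [this, hcm]
      omega

lemma exists_good : ∀ m n : ℕ, 0 < m → 3 ^ (m - 1) + 1 ≤ 2 * n → 2 * n ≤ 3 ^ m - 1 →
    ∃ w : ℕ → ℕ, GoodSeq n m w := by
  intro m
  induction m with
  | zero => intro n h; omega
  | succ m ih =>
    intro n _ h1 h2
    rcases Nat.eq_zero_or_pos m with hm0 | hm0
    · subst hm0
      have hn : n = 1 := by simp at h1 h2; omega
      subst hn
      refine ⟨fun _ => 1, ?_, ?_, ?_, ?_⟩ <;> simp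
    · -- m ≥ 1; choose n'
      have hP : 3 ^ (m - 1) * 3 = 3 ^ m := by
        rw [← pow_succ]
        congr 1
        omega
      have hP2 : 3 ^ m * 3 = 3 ^ (m + 1) := by rw [pow_succ]
      set P : ℕ := 3 ^ (m - 1) with hPdef
      have hPodd : P % 2 = 1 := Nat.odd_iff.mp (Odd.pow (by decide))
      have hP1 : 1 ≤ P := Nat.one_le_pow _ _ (by norm_num)
      have h1' : 3 * P + 1 ≤ 2 * n := by
        simp only [Nat.add_sub_cancel] at h1; omega
      have h2' : 2 * n ≤ 9 * P - 1 := by omega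
      obtain ⟨n', ha, hb', hc, hd, he⟩ :
          ∃ n', P + 1 ≤ 2 * n' ∧ 2 * n' ≤ 3 * P - 1 ∧ n' < n ∧ n ≤ 3 * n' + 1 ∧
            5 * n' + 1 ≤ 3 * n := by
        by_cases hx : 2 * n = 9 * P - 1
        · exact ⟨(3 * P - 1) / 2, by omega, by omega, by omega, by omega, by omega⟩
        · exact ⟨(n + 2) / 3, by omega, by omega, by omega, by omega, by omega⟩
      obtain ⟨w', hw'pos, hw'mono, hw'sum, hw'bd⟩ :=
        ih n' hm0 (by omega) (by omega)
      -- key junction facts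
      have hsum' : ∑ j ∈ Finset.range (m - 1), w' j + w' (m - 1) = n' := by
        have hmm : m - 1 + 1 = m := by omega
        rw [← Finset.sum_range_succ, hmm, hw'sum]
      have htop : 3 * w' (m - 1) ≤ 2 * n' + 1 := by
        have := hw'bd (m - 1) (by omega)
        omega
      have hjun : ∀ i, i < m → w' i ≤ n - n' := by
        intro i hi
        have h1 := hw'mono i (m - 1) (by omega) (by omega)
        omega
      set W : ℕ → ℕ := fun i => if i < m then w' i else n - n' with hW
      have hWlt : ∀ i, i < m → W i = w' i := by
        intro i hi; simp [hW, hi]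
      have hWm : W m = n - n' := by simp [hW]
      have hWsum : ∀ i, i ≤ m → ∑ j ∈ Finset.range i, W j = ∑ j ∈ Finset.range i, w' j := by
        intro i hi
        apply Finset.sum_congr rfl
        intro j hj
        exact hWlt j (by have := Finset.mem_range.mp hj; omega)
      refine ⟨W, ?_, ?_, ?_, ?_⟩
      · intro i hi
        by_cases h : i < m
        · rw [hWlt i h]; exact hw'pos i h
        · have : i = m := by omega
          subst this; rw [hWm]; omega
      · intro i j hij hj
        by_cases h : j < m
        · have hi : i < m := lt_of_le_of_lt hij h
          rw [hWlt i hi, hWlt j h]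
          exact hw'mono i j hij h
        · have hjm : j = m := by omega
          rw [hjm, hWm]
          by_cases h' : i < m
          · rw [hWlt i h']; exact hjun i h'
          · have hi : i = m := by omega
            rw [hi, hWm]
      · rw [Finset.sum_range_succ, hWm, hWsum m le_rfl, hw'sum]
        omega
      · intro i hi
        by_cases h : i < m
        · rw [hWlt i h, hWsum i (by omega)]
          exact hw'bd i h
        · have him : i = m := by omega
          rw [him, hWm, hWsum m le_rfl, hw'sum]
          omega

/-- If `(3^(m-1) + 1) / 2 ≤ n ≤ (3^m - 1) / 2` (stated doubled, exactly
equivalently, as `3^(m-1) + 1 ≤ 2n ≤ 3^m - 1`), then there is a weighing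
sequence for `n` with exactly `m` parts, and every weighing sequence for `n`
has at least `m` parts; hence the minimal length equals `m`. -/
theorem exists_length_m_and_min (m n : ℕ) (hm : 0 < m)
    (h1 : 3 ^ (m - 1) + 1 ≤ 2 * n) (h2 : 2 * n ≤ 3 ^ m - 1) :
    (∃ w : ℕ → ℕ, IsWeighingSeq n m w) ∧
      ∀ (m' : ℕ) (w : ℕ → ℕ), IsWeighingSeq n m' w → m ≤ m' := by
  constructor
  · obtain ⟨w, hpos, hmono, hsum, hbd⟩ := exists_good m n hm h1 h2
    refine ⟨w, hpos, hmono, hsum, ?_⟩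
    intro k hk1 hk2
    have hsZ : (∑ i ∈ Finset.range m, (w i : ℤ)) = (n : ℤ) := by
      exact_mod_cast congrArg (Nat.cast : ℕ → ℤ) hsum
    exact good_rep w m hbd k (by omega) (by omega)
  · intro m' w hw
    obtain ⟨hpos, hmono, hsum, hrep⟩ := hw
    -- every k with |k| ≤ n is representable
    have hrep' : ∀ k : ℤ, ∃ u : ℕ → ℤ, (∀ i, u i = -1 ∨ u i = 0 ∨ u i = 1) ∧
        (k ∈ Finset.Icc (-(n:ℤ)) (n:ℤ) → k = ∑ i ∈ Finset.range m', u i * (w i : ℤ)) := by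
      intro k
      by_cases hk : k ∈ Finset.Icc (-(n:ℤ)) (n:ℤ)
      · rw [Finset.mem_Icc] at hk
        rcases lt_trichotomy k 0 with hneg | hzero | hposk
        · obtain ⟨u, hu1, hu2⟩ := hrep (-k) (by omega) (by omega)
          refine ⟨fun i => -(u i), fun i => by rcases hu1 i with h|h|h <;> simp [h], ?_⟩
          intro _
          have hk2 : k = -∑ i ∈ Finset.range m', u i * (w i : ℤ) := by
            rw [← hu2]; ring
          rw [hk2, ← Finset.sum_neg_distrib]
          apply Finset.sum_congr rfl
          intro i _
          ring
        · exact ⟨fun _ => 0, fun i => Or.inr (Or.inl rfl), fun _ => by simp [hzero]⟩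
        · obtain ⟨u, hu1, hu2⟩ := hrep k (by omega) (by omega)
          exact ⟨u, hu1, fun _ => hu2⟩
      · exact ⟨fun _ => 0, fun i => Or.inr (Or.inl rfl), fun h => absurd h hk⟩
    choose U hU1 hU2 using hrep'
    -- encode into Fin m' → Fin 3
    classical
    set G : ℤ → (Fin m' → Fin 3) := fun k i =>
      if U k i = -1 then 0 else if U k i = 0 then 1 else 2 with hG
    have hinj : Set.InjOn G (Finset.Icc (-(n:ℤ)) (n:ℤ)) := by
      intro a ha b hb hab
      have huv : ∀ i : ℕ, i < m' → U a i = U b i := by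
        intro i hi
        have := congrFun hab ⟨i, hi⟩
        simp only [hG] at this
        rcases hU1 a i with h1|h1|h1 <;> rcases hU1 b i with h2|h2|h2 <;>
          simp [h1, h2] at this ⊢ <;> omega
      have ha' := hU2 a ha
      have hb' := hU2 b hb
      rw [ha', hb']
      apply Finset.sum_congr rfl
      intro i hi
      rw [huv i (Finset.mem_range.mp hi)]
    have hcard : (Finset.Icc (-(n:ℤ)) (n:ℤ)).card ≤ Fintype.card (Fin m' → Fin 3) := by
      rw [← Finset.card_univ]
      exact Finset.card_le_card_of_injOn G (fun _ _ => Finset.mem_univ _) hinj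
    have hIcc : (Finset.Icc (-(n:ℤ)) (n:ℤ)).card = 2 * n + 1 := by
      rw [Int.card_Icc]
      simp
      omega
    have hFc : Fintype.card (Fin m' → Fin 3) = 3 ^ m' := by
      simp
    rw [hIcc, hFc] at hcard
    have hlt : 3 ^ (m - 1) < 3 ^ m' := by omega
    have : m - 1 < m' := by
      exact (Nat.pow_lt_pow_iff_right (by norm_num)).mp hlt
    omega
end

section
/- For every positive integer n, the minimal length of a weighing sequence for n (the common length of all feasible partitions of n) equals ⌈log_3(2n)⌉. -/
open Finset

def p3 : ℕ → ℕ
  | 0 => 0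
  | (i+1) => 3 * p3 i + 1

lemma p3_spec (i : ℕ) : 2 * p3 i + 1 = 3 ^ i := by
  induction i with
  | zero => simp [p3]
  | succ i ih => simp only [p3, pow_succ]; omega

lemma repr_lemma (w : ℕ → ℕ) (m : ℕ)
    (h : ∀ i, i < m → (w i : ℤ) ≤ 2 * (∑ l ∈ range i, (w l : ℤ)) + 1) :
    ∀ k : ℤ, |k| ≤ ∑ i ∈ range m, (w i : ℤ) →
    ∃ u : ℕ → ℤ, (∀ i, u i = -1 ∨ u i = 0 ∨ u i = 1) ∧
      k = ∑ i ∈ range m, u i * (w i : ℤ) := by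
  induction m with
  | zero =>
    intro k hk
    simp only [range_zero, sum_empty] at hk ⊢
    refine ⟨fun _ => 0, fun i => Or.inr (Or.inl rfl), ?_⟩
    have : k = 0 := by rw [abs_le] at hk; omega
    simp [this]
  | succ m ih =>
    intro k hk
    have hwm := h m (Nat.lt_succ_self m)
    have ih' := ih (fun i hi => h i (hi.trans (Nat.lt_succ_self m)))
    have hS : (0:ℤ) ≤ ∑ l ∈ range m, (w l : ℤ) :=
      Finset.sum_nonneg fun i _ => Int.natCast_nonneg _
    rw [Finset.sum_range_succ] at hk
    set S := ∑ l ∈ range m, (w l : ℤ) with hSdef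
    have key : ∀ c : ℤ, (c = -1 ∨ c = 0 ∨ c = 1) → |k - c * w m| ≤ S →
        ∃ u : ℕ → ℤ, (∀ i, u i = -1 ∨ u i = 0 ∨ u i = 1) ∧
          k = ∑ i ∈ range (m+1), u i * (w i : ℤ) := by
      intro c hc habs
      obtain ⟨u, hu, hrep⟩ := ih' (k - c * w m) habs
      refine ⟨Function.update u m c, ?_, ?_⟩
      · intro i
        rcases eq_or_ne i m with rfl | hne
        · simpa using hc
        · simpa [Function.update_of_ne hne] using hu i
      · rw [Finset.sum_range_succ, Function.update_self,
          Finset.sum_congr rfl (fun i hi => by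
            rw [Function.update_of_ne (by simp at hi; omega)])]
        omega
    rw [abs_le] at hk
    rcases lt_or_ge S k with h1 | h1
    · exact key 1 (by tauto) (by rw [abs_le]; constructor <;> nlinarith)
    rcases lt_or_ge k (-S) with h2 | h2
    · exact key (-1) (by tauto) (by rw [abs_le]; constructor <;> nlinarith)
    · exact key 0 (by tauto) (by rw [abs_le]; constructor <;> nlinarith)

lemma card_bound (n m : ℕ) (w : ℕ → ℕ) (h : IsWeighingSeq n m w) :
    2 * n + 1 ≤ 3 ^ m := by
  obtain ⟨-, -, -, hrep⟩ := h
  classical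
  set T : Finset (Fin m → ℤ) := Fintype.piFinset fun _ => ({-1, 0, 1} : Finset ℤ) with hT
  set S : Finset ℤ := T.image (fun u => ∑ i : Fin m, u i * (w (i : ℕ) : ℤ)) with hSdef
  have hsub : Finset.Icc (-(n:ℤ)) n ⊆ S := by
    intro k hk
    rw [Finset.mem_Icc] at hk
    have build : ∀ u : ℕ → ℤ, (∀ i, u i = -1 ∨ u i = 0 ∨ u i = 1) →
        k = ∑ i ∈ range m, u i * (w i : ℤ) → k ∈ S := by
      intro u hu hk
      rw [hSdef, Finset.mem_image]
      refine ⟨fun i => u i, ?_, ?_⟩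
      · rw [hT, Fintype.mem_piFinset]
        intro i; rcases hu i with h | h | h <;> simp [h]
      · rw [Fin.sum_univ_eq_sum_range (fun i => u i * (w i : ℤ)) m, hk]
    rcases lt_trichotomy k 0 with hneg | hzero | hpos
    · obtain ⟨u, hu, hrk⟩ := hrep (-k) (by omega) (by omega)
      refine build (fun i => -(u i)) (fun i => by rcases hu i with h|h|h <;> simp [h]) ?_
      have : k = -∑ i ∈ range m, u i * (w i : ℤ) := by omega
      rw [this, ← Finset.sum_neg_distrib]
      exact Finset.sum_congr rfl fun i _ => by ring
    · exact build (fun _ => 0) (fun i => Or.inr (Or.inl rfl)) (by simp [hzero])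
    · obtain ⟨u, hu, hrk⟩ := hrep k (by omega) (by omega)
      exact build u hu hrk
  have h1 : (Finset.Icc (-(n:ℤ)) n).card = 2 * n + 1 := by
    rw [Int.card_Icc]
    omega
  have h2 : S.card ≤ T.card := Finset.card_image_le
  have h3 : T.card = 3 ^ m := by
    rw [hT, Fintype.card_piFinset]
    simp
  calc 2 * n + 1 = (Finset.Icc (-(n:ℤ)) n).card := h1.symm
    _ ≤ S.card := Finset.card_le_card hsub
    _ ≤ T.card := h2
    _ = 3 ^ m := h3

lemma exists_seq (n : ℕ) (M : ℕ) (h1 : 3 ^ M < 2 * n + 1) (h2 : 2 * n + 1 ≤ 3 ^ (M + 1)) :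
    ∃ w : ℕ → ℕ, IsWeighingSeq n (M + 1) w := by
  have pM := p3_spec M
  have pM1 := p3_spec (M + 1)
  have hp3 : p3 (M + 1) = 3 * p3 M + 1 := rfl
  set t := n - p3 M with ht
  have ht1 : 1 ≤ t := by omega
  have htn : p3 M + t = n := by omega
  have ht2 : t ≤ 3 ^ M := by omega
  have hex : ∃ j, t ≤ 3 ^ j := ⟨M, ht2⟩
  set j := Nat.find hex with hjdef
  have hj : t ≤ 3 ^ j := Nat.find_spec hex
  have hj' : ∀ i, i < j → 3 ^ i < t := fun i hi => by
    have := Nat.find_min hex hi; omega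
  have hjM : j ≤ M := Nat.find_min' hex ht2
  set w : ℕ → ℕ := fun i => if i < j then 3 ^ i else if i = j then t else 3 ^ (i - 1) with hw
  have sumw : ∀ i, ∑ l ∈ range i, w l = if i ≤ j then p3 i else p3 (i - 1) + t := by
    intro i
    induction i with
    | zero => simp [p3]
    | succ i ih =>
      rw [Finset.sum_range_succ, ih]
      have pspec := p3_spec i
      have hpi : p3 (i + 1) = 3 * p3 i + 1 := rfl
      rcases lt_trichotomy i j with hij | hij | hij
      · have c1 : i ≤ j := le_of_lt hij
        have c2 : i + 1 ≤ j := hij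
        simp only [hw, if_pos c1, if_pos c2, if_pos hij]
        omega
      · simp only [hw, if_pos (le_of_eq hij), if_neg (by omega : ¬ i < j), if_pos hij,
          if_neg (by omega : ¬ i + 1 ≤ j), Nat.add_sub_cancel]
      · have hi1 : 1 ≤ i := by omega
        have hpi' : p3 i = 3 * p3 (i - 1) + 1 := by
          have h0 : p3 (i - 1 + 1) = 3 * p3 (i - 1) + 1 := rfl
          rwa [show i - 1 + 1 = i by omega] at h0
        have pspec' := p3_spec (i - 1)
        simp only [hw, if_neg (by omega : ¬ i ≤ j), if_neg (by omega : ¬ i < j),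
          if_neg (by omega : i ≠ j), if_neg (by omega : ¬ i + 1 ≤ j), Nat.add_sub_cancel]
        omega
  have step : ∀ i, w i ≤ w (i + 1) := by
    intro i
    have p1 := p3_spec i
    simp only [hw, Nat.add_sub_cancel]
    rcases lt_trichotomy (i + 1) j with hc | hc | hc
    · rw [if_pos (by omega : i < j), if_pos hc]
      exact Nat.pow_le_pow_right (by norm_num) (by omega)
    · rw [if_pos (by omega : i < j), if_neg (by omega : ¬ i + 1 < j), if_pos hc]
      exact le_of_lt (hj' i (by omega))
    · rcases lt_trichotomy i j with hd | hd | hd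
      · omega
      · rw [if_neg (by omega : ¬ i < j), if_pos hd, if_neg (by omega : ¬ i + 1 < j),
          if_neg (by omega : i + 1 ≠ j)]
        rw [hd]; exact hj
      · rw [if_neg (by omega : ¬ i < j), if_neg (by omega : i ≠ j),
          if_neg (by omega : ¬ i + 1 < j), if_neg (by omega : i + 1 ≠ j)]
        exact Nat.pow_le_pow_right (by norm_num) (by omega)
  have mono : Monotone w := monotone_nat_of_le_succ step
  have hsum : ∑ i ∈ range (M + 1), w i = n := by
    rw [sumw (M + 1), if_neg (by omega : ¬ M + 1 ≤ j), Nat.add_sub_cancel]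
    exact htn
  have hcond : ∀ i, i < M + 1 → (w i : ℤ) ≤ 2 * (∑ l ∈ range i, (w l : ℤ)) + 1 := by
    intro i hi
    have natver : w i ≤ 2 * (∑ l ∈ range i, w l) + 1 := by
      rw [sumw i]
      have p1 := p3_spec i
      have p2 := p3_spec j
      rcases lt_trichotomy i j with hc | hc | hc
      · simp only [hw, if_pos hc, if_pos (le_of_lt hc)]
        omega
      · simp only [hw, if_neg (by omega : ¬ i < j), if_pos hc, if_pos (le_of_eq hc)]
        have : 3 ^ i = 3 ^ j := by rw [hc]
        omega
      · have p3' := p3_spec (i - 1)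
        simp only [hw, if_neg (by omega : ¬ i < j), if_neg (by omega : i ≠ j),
          if_neg (by omega : ¬ i ≤ j)]
        omega
    have : (∑ l ∈ range i, (w l : ℤ)) = ((∑ l ∈ range i, w l : ℕ) : ℤ) := by push_cast; rfl
    rw [this]
    exact_mod_cast natver
  refine ⟨w, ?_, fun i j' hij hj'' => mono hij, hsum, ?_⟩
  · intro i _
    simp only [hw]
    split_ifs <;> positivity
  · intro k hk1 hk2
    apply repr_lemma w (M + 1) hcond
    have hcast : ∑ i ∈ range (M + 1), (w i : ℤ) = (n : ℤ) := by
      rw [show (∑ i ∈ range (M+1), (w i : ℤ)) = ((∑ i ∈ range (M+1), w i : ℕ) : ℤ) by push_cast; rfl, hsum]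
    rw [hcast, abs_le]
    omega

/-- For every positive integer `n`, the minimal number of parts of a weighing
sequence for `n` equals `⌈log₃ (2n)⌉`. -/
theorem min_length_eq_ceil_logb (n : ℕ) (hn : 0 < n) :
    ((sInf {m : ℕ | ∃ w : ℕ → ℕ, IsWeighingSeq n m w} : ℕ) : ℤ) =
      ⌈Real.logb 3 (2 * (n : ℝ))⌉ := by
  have hex : ∃ m, 2 * n + 1 ≤ 3 ^ m :=
    ⟨2 * n + 1, le_of_lt (Nat.lt_pow_self (by norm_num))⟩
  set m0 := Nat.find hex with hm0
  have hspec : 2 * n + 1 ≤ 3 ^ m0 := Nat.find_spec hex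
  have hm0pos : 1 ≤ m0 := by
    by_contra h
    have h0 : m0 = 0 := by omega
    rw [h0, pow_zero] at hspec
    omega
  have hmin : 3 ^ (m0 - 1) < 2 * n + 1 := by
    have := Nat.find_min hex (show m0 - 1 < m0 by omega)
    omega
  obtain ⟨w, hw⟩ := exists_seq n (m0 - 1) hmin
    (by rw [show m0 - 1 + 1 = m0 by omega]; exact hspec)
  rw [show m0 - 1 + 1 = m0 by omega] at hw
  have hmem : m0 ∈ {m : ℕ | ∃ w : ℕ → ℕ, IsWeighingSeq n m w} := ⟨w, hw⟩
  have hinf_eq : sInf {m : ℕ | ∃ w : ℕ → ℕ, IsWeighingSeq n m w} = m0 := by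
    apply le_antisymm (Nat.sInf_le hmem)
    obtain ⟨w', hw'⟩ := Nat.sInf_mem (⟨m0, hmem⟩ :
      Set.Nonempty {m : ℕ | ∃ w : ℕ → ℕ, IsWeighingSeq n m w})
    exact Nat.find_le (card_bound _ _ _ hw')
  rw [hinf_eq]
  symm
  rw [Int.ceil_eq_iff]
  have hparity : 3 ^ (m0 - 1) % 2 = 1 := by
    rw [Nat.pow_mod]
    norm_num
  have h3M : 3 ^ (m0 - 1) < 2 * n := by omega
  have hb : (1:ℝ) < 3 := by norm_num
  have h2n : (0:ℝ) < 2 * (n : ℝ) := by positivity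
  constructor
  · have hcast : ((3:ℝ)) ^ (m0 - 1) < 2 * (n : ℝ) := by exact_mod_cast h3M
    have hlog : Real.logb 3 ((3:ℝ) ^ (m0 - 1)) < Real.logb 3 (2 * (n : ℝ)) :=
      Real.logb_lt_logb hb (by positivity) hcast
    have heq : Real.logb 3 ((3:ℝ) ^ (m0 - 1)) = ((m0 - 1 : ℕ) : ℝ) := by
      rw [Real.logb_pow, Real.logb_self_eq_one (by norm_num)]
      ring
    rw [heq, Nat.cast_sub hm0pos] at hlog
    push_cast
    simpa using hlog
  · have hcast : 2 * (n : ℝ) ≤ (3:ℝ) ^ m0 := by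
      have : 2 * n ≤ 3 ^ m0 := by omega
      exact_mod_cast this
    have hlog : Real.logb 3 (2 * (n : ℝ)) ≤ Real.logb 3 ((3:ℝ) ^ m0) :=
      (Real.logb_le_logb hb h2n (by positivity)).mpr hcast
    have heq : Real.logb 3 ((3:ℝ) ^ m0) = (m0 : ℝ) := by
      rw [Real.logb_pow, Real.logb_self_eq_one (by norm_num)]
      ring
    rw [heq] at hlog
    exact_mod_cast hlog
end

section
/- Let n be a positive integer and let w_1 ≤ w_2 ≤ … ≤ w_m be a feasible partition of n with m ≥ 1, and let R_{m−1} = w_1 + … + w_{m−1}. Then R_{m−1} ≥ ⌈(n − 1)/3⌉. -/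
/-- A feasible partition of `n`: a weighing sequence for `n` of minimal length. -/
def IsFeasible (n m : ℕ) (w : ℕ → ℕ) : Prop :=
  IsWeighingSeq n m w ∧ ∀ (m' : ℕ) (w' : ℕ → ℕ), IsWeighingSeq n m' w' → m ≤ m'

/-- For a feasible partition of `n` with `m ≥ 1` parts, the sum of the first
`m - 1` parts satisfies `R_(m-1) ≥ ⌈(n - 1) / 3⌉`. -/
theorem penultimate_partial_sum_ge_ceil (n m : ℕ) (w : ℕ → ℕ)
    (hn : 0 < n) (hm : 1 ≤ m) (hw : IsFeasible n m w) :
    ((∑ j ∈ Finset.range (m - 1), w j : ℕ) : ℤ) ≥ ⌈((n : ℚ) - 1) / 3⌉ := by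
  obtain ⟨⟨hpos, hmono, hsum, hrep⟩, _⟩ := hw
  set R : ℤ := ((∑ j ∈ Finset.range (m - 1), w j : ℕ) : ℤ) with hRdef
  have hm1 : m - 1 + 1 = m := by omega
  have hsplit : (n : ℤ) = R + (w (m - 1) : ℤ) := by
    have h := Finset.sum_range_succ w (m - 1)
    rw [hm1, hsum] at h
    rw [hRdef]
    exact_mod_cast h
  have hwlast : 1 ≤ (w (m - 1) : ℤ) := by
    exact_mod_cast hpos (m - 1) (by omega)
  have hR0 : 0 ≤ R := by positivity
  obtain ⟨u, hu, hk⟩ := hrep (R + 1) (by linarith) (by linarith)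
  rw [← hm1, Finset.sum_range_succ] at hk
  have hRsum : R = ∑ i ∈ Finset.range (m - 1), ((w i : ℤ)) := by
    rw [hRdef]; push_cast; rfl
  have hS_le : ∑ i ∈ Finset.range (m - 1), u i * (w i : ℤ) ≤ R := by
    rw [hRsum]
    apply Finset.sum_le_sum
    intro i _
    have hw0 : (0 : ℤ) ≤ (w i : ℤ) := by positivity
    rcases hu i with h | h | h <;> rw [h] <;> linarith
  have hS_ge : -R ≤ ∑ i ∈ Finset.range (m - 1), u i * (w i : ℤ) := by
    rw [hRsum, ← Finset.sum_neg_distrib]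
    apply Finset.sum_le_sum
    intro i _
    have hw0 : (0 : ℤ) ≤ (w i : ℤ) := by positivity
    rcases hu i with h | h | h <;> rw [h] <;> linarith
  have hn3 : (n : ℤ) ≤ 3 * R + 1 := by
    rcases hu (m - 1) with h | h | h <;> rw [h] at hk <;> linarith
  rw [ge_iff_le, Int.ceil_le]
  rw [div_le_iff₀ (by norm_num : (0:ℚ) < 3)]
  have : ((n : ℤ) : ℚ) ≤ ((3 * R + 1 : ℤ) : ℚ) := by exact_mod_cast hn3
  push_cast at this ⊢
  linarith
end

section
/- Let m ≥ 2 and let n be an integer with (3^{m−1} + 1)/2 ≤ n ≤ (3^m − 1)/2 (so every feasible partition of n has m parts). Then there exists a feasible partition w_1 ≤ … ≤ w_m of n with R_{m−1} = w_1 + … + w_{m−1} = ⌈(n − 1)/3⌉; that is, the lower bound ⌈(n − 1)/3⌉ for R_{m−1} is attained. -/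
def gW (x : ℕ) : ℕ := (x + 1) / 3

lemma gW_le (x : ℕ) : gW x ≤ x := by unfold gW; omega
lemma gW_lt (x : ℕ) (h : 1 ≤ x) : gW x < x := by unfold gW; omega
lemma gW_adj (y : ℕ) : gW y - gW (gW y) ≤ y - gW y := by unfold gW; omega
lemma gW_bnd (x : ℕ) : x - gW x ≤ 2 * gW x + 1 := by unfold gW; omega
lemma gW_step_ub (x p : ℕ) (h : 2 * x ≤ 3 * p - 1) (hp : 1 ≤ p) (hodd : p % 2 = 1) :
    2 * gW x ≤ p - 1 := by unfold gW; omega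
lemma gW_step_lb (x p : ℕ) (h : 3 * p + 1 ≤ 2 * x) (hodd : p % 2 = 1) :
    p + 1 ≤ 2 * gW x := by unfold gW; omega

lemma repr_aux (w : ℕ → ℕ) : ∀ m : ℕ,
    (∀ i, i < m → (w i : ℤ) ≤ 2 * (∑ j ∈ Finset.range i, (w j : ℤ)) + 1) →
    ∀ k : ℤ, |k| ≤ ∑ j ∈ Finset.range m, (w j : ℤ) →
    ∃ u : ℕ → ℤ, (∀ i, u i = -1 ∨ u i = 0 ∨ u i = 1) ∧
      k = ∑ i ∈ Finset.range m, u i * (w i : ℤ) := by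
  intro m
  induction m with
  | zero =>
    intro _ k hk
    refine ⟨fun _ => 0, fun i => Or.inr (Or.inl rfl), ?_⟩
    simp only [Finset.range_zero, Finset.sum_empty] at hk ⊢
    have := abs_le.mp hk
    omega
  | succ m ih =>
    intro hw k hk
    set S := ∑ j ∈ Finset.range m, (w j : ℤ) with hS
    have hS0 : 0 ≤ S := Finset.sum_nonneg fun j _ => by positivity
    have hwm : (w m : ℤ) ≤ 2 * S + 1 := hw m (by omega)
    have hwm0 : (0:ℤ) ≤ (w m : ℤ) := by positivity
    rw [Finset.sum_range_succ] at hk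
    have habs := abs_le.mp hk
    obtain ⟨c, hc, hkc⟩ : ∃ c : ℤ, (c = -1 ∨ c = 0 ∨ c = 1) ∧ |k - c * (w m : ℤ)| ≤ S := by
      rcases lt_or_ge S k with h | h
      · exact ⟨1, Or.inr (Or.inr rfl), by rw [abs_le]; constructor <;> linarith [habs.2]⟩
      rcases lt_or_ge k (-S) with h' | h'
      · exact ⟨-1, Or.inl rfl, by rw [abs_le]; constructor <;> linarith [habs.1]⟩
      · exact ⟨0, Or.inr (Or.inl rfl), by rw [abs_le]; constructor <;> linarith⟩
    obtain ⟨u, hu, hsum⟩ := ih (fun i hi => hw i (by omega)) (k - c * (w m : ℤ)) hkc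
    refine ⟨Function.update u m c, ?_, ?_⟩
    · intro i
      by_cases h : i = m
      · subst h; simpa using hc
      · simpa [Function.update_of_ne h] using hu i
    · rw [Finset.sum_range_succ]
      have hcong : ∀ i ∈ Finset.range m,
          Function.update u m c i * (w i : ℤ) = u i * (w i : ℤ) := by
        intro i hi
        rw [Function.update_of_ne (by simp at hi; omega)]
      rw [Finset.sum_congr rfl hcong, Function.update_self]
      linarith [hsum]

lemma count_bound (n m' : ℕ) (w' : ℕ → ℕ)
    (hrep : ∀ k : ℤ, 1 ≤ k → k ≤ (n : ℤ) →
      ∃ u : ℕ → ℤ, (∀ i, u i = -1 ∨ u i = 0 ∨ u i = 1) ∧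
        k = ∑ i ∈ Finset.range m', u i * (w' i : ℤ)) :
    2 * n + 1 ≤ 3 ^ m' := by
  classical
  have key : ∀ k : ℤ, k ∈ Finset.Icc (-(n:ℤ)) (n:ℤ) → ∃ u : Fin m' → ℤ,
      (∀ i, u i ∈ Finset.Icc (-1:ℤ) 1) ∧ k = ∑ i, u i * (w' (i : ℕ) : ℤ) := by
    intro k hk
    rw [Finset.mem_Icc] at hk
    rcases lt_trichotomy k 0 with h | h | h
    · obtain ⟨u, hu, hk'⟩ := hrep (-k) (by omega) (by omega)
      refine ⟨fun i => -(u (i : ℕ)), fun i => ?_, ?_⟩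
      · rcases hu (i : ℕ) with h' | h' | h' <;> simp [h', Finset.mem_Icc] <;> norm_num
      · rw [Fin.sum_univ_eq_sum_range (fun i => -(u i) * (w' i : ℤ))]
        simp only [neg_mul, Finset.sum_neg_distrib]
        omega
    · refine ⟨fun _ => 0, fun i => by simp, by simp [h]⟩
    · obtain ⟨u, hu, hk'⟩ := hrep k (by omega) (by omega)
      refine ⟨fun i => u (i : ℕ), fun i => ?_, ?_⟩
      · rcases hu (i : ℕ) with h' | h' | h' <;> simp [h', Finset.mem_Icc] <;> norm_num
      · rw [hk', ← Fin.sum_univ_eq_sum_range (fun i => u i * (w' i : ℤ))]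
  choose F hF1 hF2 using key
  have hinj : Function.Injective
      (fun k : {x // x ∈ Finset.Icc (-(n:ℤ)) (n:ℤ)} =>
        (⟨F k.1 k.2, by rw [Fintype.mem_piFinset]; exact fun i => hF1 k.1 k.2 i⟩ :
          {g // g ∈ Fintype.piFinset fun _ : Fin m' => Finset.Icc (-1:ℤ) 1})) := by
    intro a b hab
    apply Subtype.ext
    have hv : F a.1 a.2 = F b.1 b.2 := congrArg Subtype.val hab
    rw [hF2 a.1 a.2, hF2 b.1 b.2, hv]
  have hle := Fintype.card_le_of_injective _ hinj
  rw [Fintype.card_coe, Fintype.card_coe] at hle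
  have hIcc : (Finset.Icc (-(n:ℤ)) (n:ℤ)).card = 2 * n + 1 := by
    rw [Int.card_Icc]; omega
  have hpi : (Fintype.piFinset fun _ : Fin m' => Finset.Icc (-1:ℤ) 1).card = 3 ^ m' := by
    rw [Fintype.card_piFinset]
    simp [Int.card_Icc]
  omega

/-- For `m ≥ 2` and `(3^(m-1) + 1)/2 ≤ n ≤ (3^m - 1)/2` (stated doubled),
there is a feasible partition of `n` (with `m` parts) attaining the lower
bound `R_(m-1) = ⌈(n - 1) / 3⌉`. -/
theorem exists_feasible_with_min_penultimate_sum (m n : ℕ) (hm : 2 ≤ m)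
    (h1 : 3 ^ (m - 1) + 1 ≤ 2 * n) (h2 : 2 * n ≤ 3 ^ m - 1) :
    ∃ w : ℕ → ℕ, IsFeasible n m w ∧
      ((∑ j ∈ Finset.range (m - 1), w j : ℕ) : ℤ) = ⌈((n : ℚ) - 1) / 3⌉ := by
  set R : ℕ → ℕ := fun i => gW^[m - i] n with hR
  set w : ℕ → ℕ := fun i => R (i + 1) - R i with hw
  have hRm : R m = n := by simp [hR]
  have hstep : ∀ i, i < m → R i = gW (R (i + 1)) := by
    intro i hi
    show gW^[m - i] n = gW (gW^[m - (i + 1)] n)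
    rw [show m - i = (m - (i + 1)) + 1 from by omega, Function.iterate_succ_apply']
  have hub : ∀ j, j ≤ m → 2 * gW^[j] n ≤ 3 ^ (m - j) - 1 := by
    intro j
    induction j with
    | zero => intro _; simpa using h2
    | succ j ih =>
      intro hj
      rw [Function.iterate_succ_apply']
      have h3 : 3 ^ (m - j) = 3 * 3 ^ (m - (j + 1)) := by
        rw [← pow_succ']
        congr 1
        omega
      refine gW_step_ub _ _ ?_ (Nat.one_le_pow _ _ (by norm_num)) ?_
      · rw [← h3]; exact ih (by omega)
      · exact Nat.odd_iff.mp (Odd.pow (by decide))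
  have hlb : ∀ j, j ≤ m - 1 → 3 ^ (m - 1 - j) + 1 ≤ 2 * gW^[j] n := by
    intro j
    induction j with
    | zero => intro _; simpa using h1
    | succ j ih =>
      intro hj
      rw [Function.iterate_succ_apply']
      have h3 : 3 ^ (m - 1 - j) = 3 * 3 ^ (m - 1 - (j + 1)) := by
        rw [← pow_succ']
        congr 1
        omega
      refine gW_step_lb _ _ ?_ (Nat.odd_iff.mp (Odd.pow (by decide)))
      rw [← h3]; exact ih (by omega)
  have hRub : ∀ i, i ≤ m → 2 * R i ≤ 3 ^ i - 1 := by
    intro i hi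
    have := hub (m - i) (by omega)
    rwa [show m - (m - i) = i from by omega] at this
  have hRlb : ∀ i, 1 ≤ i → i ≤ m → 3 ^ (i - 1) + 1 ≤ 2 * R i := by
    intro i hi1 hi2
    have := hlb (m - i) (by omega)
    rwa [show m - 1 - (m - i) = i - 1 from by omega] at this
  have hR0 : R 0 = 0 := by have := hRub 0 (by omega); simpa using this
  have hRpos : ∀ i, 1 ≤ i → i ≤ m → 1 ≤ R i := by
    intro i hi1 hi2
    have := hRlb i hi1 hi2
    have h3 : 1 ≤ 3 ^ (i - 1) := Nat.one_le_pow _ _ (by norm_num)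
    omega
  have hmono : ∀ i, i < m → R i ≤ R (i + 1) := by
    intro i hi; rw [hstep i hi]; exact gW_le _
  have hsumR : ∀ i, i ≤ m → ∑ j ∈ Finset.range i, w j = R i := by
    intro i
    induction i with
    | zero => intro _; simp [hR0]
    | succ i ih =>
      intro hi
      rw [Finset.sum_range_succ, ih (by omega)]
      have := hmono i (by omega)
      simp only [hw]
      omega
  have hwpos : ∀ i, i < m → 0 < w i := by
    intro i hi
    have h1' := hRpos (i + 1) (by omega) (by omega)
    have h2' := hstep i hi
    have := gW_lt (R (i + 1)) h1'
    simp only [hw]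
    omega
  have hwmono : ∀ i j, i ≤ j → j < m → w i ≤ w j := by
    have adj : ∀ i, i + 1 < m → w i ≤ w (i + 1) := by
      intro i hi
      have e1 := hstep i (by omega)
      have e2 := hstep (i + 1) hi
      simp only [hw]
      rw [e1, e2]
      exact gW_adj _
    intro i j hij hjm
    induction j, hij using Nat.le_induction with
    | base => exact le_rfl
    | succ j hij ih => exact le_trans (ih (by omega)) (adj j hjm)
  have hwbnd : ∀ i, i < m → w i ≤ 2 * R i + 1 := by
    intro i hi
    have e1 := hstep i hi
    simp only [hw]
    rw [e1]
    exact gW_bnd _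
  have hsumn : ∑ j ∈ Finset.range m, w j = n := by rw [hsumR m le_rfl, hRm]
  have hweigh : IsWeighingSeq n m w := by
    refine ⟨hwpos, hwmono, hsumn, ?_⟩
    intro k hk1 hk2
    have hcast : ∀ i, i ≤ m → (∑ j ∈ Finset.range i, (w j : ℤ)) = (R i : ℤ) := by
      intro i hi
      rw [← Nat.cast_sum, hsumR i hi]
    refine repr_aux w m (fun i hi => ?_) k ?_
    · rw [hcast i (by omega)]
      have := hwbnd i hi
      push_cast
      omega
    · rw [hcast m le_rfl, hRm, abs_le]
      omega
  refine ⟨w, ⟨hweigh, ?_⟩, ?_⟩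
  · intro m' w' hw'
    have hcb := count_bound n m' w' hw'.2.2.2
    by_contra hcon
    have hm' : m' ≤ m - 1 := by omega
    have hple : 3 ^ m' ≤ 3 ^ (m - 1) := Nat.pow_le_pow_right (by norm_num) hm'
    omega
  · rw [hsumR (m - 1) (by omega)]
    have hR1 : R (m - 1) = gW n := by
      show gW^[m - (m - 1)] n = gW n
      rw [show m - (m - 1) = 1 from by omega]
      simp
    rw [hR1]
    have hn2 : 2 ≤ n := by
      have h3 : 3 ≤ 3 ^ (m - 1) := by
        calc 3 = 3 ^ 1 := (pow_one 3).symm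
        _ ≤ 3 ^ (m - 1) := Nat.pow_le_pow_right (by norm_num) (by omega)
      omega
    symm
    rw [Int.ceil_eq_iff]
    have hq := Nat.div_add_mod (n + 1) 3
    have hr : (n + 1) % 3 < 3 := Nat.mod_lt _ (by norm_num)
    set q := (n + 1) / 3 with hqdef
    set r := (n + 1) % 3 with hrdef
    have hqQ : (3 : ℚ) * q + r = n + 1 := by exact_mod_cast hq
    have hrQ : (r : ℚ) ≤ 2 := by exact_mod_cast Nat.lt_succ_iff.mp hr
    have hrQ0 : (0 : ℚ) ≤ r := by positivity
    have hgq : ((gW n : ℤ) : ℚ) = (q : ℚ) := by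
      norm_cast
    constructor
    · rw [hgq, lt_div_iff₀ (by norm_num : (0:ℚ) < 3)]
      linarith
    · rw [hgq, div_le_iff₀ (by norm_num : (0:ℚ) < 3)]
      linarith
end

section
/- Let m ≥ 2 and let n be an integer with (3^{m−1} + 1)/2 ≤ n ≤ (3^{m−1} + 1)/2 + 3^{m−2} (so every feasible partition of n has m parts). Then every feasible partition w_1 ≤ … ≤ w_m of n satisfies R_{m−1} = w_1 + … + w_{m−1} ≤ ⌊(2n + 3^{m−2} − 1)/4⌋. -/
/-- A signed sum of `w 0, …, w (i-1)` with coefficients in `{-1,0,1}` is bounded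
in absolute value by the partial sum. -/
lemma abs_signed_sum_le (w : ℕ → ℕ) (u : ℕ → ℤ)
    (hu : ∀ j, u j = -1 ∨ u j = 0 ∨ u j = 1) (i : ℕ) :
    |∑ j ∈ Finset.range i, u j * (w j : ℤ)| ≤ ((∑ j ∈ Finset.range i, w j : ℕ) : ℤ) := by
  calc |∑ j ∈ Finset.range i, u j * (w j : ℤ)|
      ≤ ∑ j ∈ Finset.range i, |u j * (w j : ℤ)| := Finset.abs_sum_le_sum_abs _ _
    _ ≤ ∑ j ∈ Finset.range i, (w j : ℤ) := by
        apply Finset.sum_le_sum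
        intro j _
        rw [abs_mul]
        rcases hu j with h | h | h <;> simp [h]
    _ = ((∑ j ∈ Finset.range i, w j : ℕ) : ℤ) := by push_cast; ring

/-- For `m ≥ 2` and `(3^(m-1) + 1)/2 ≤ n ≤ (3^(m-1) + 1)/2 + 3^(m-2)`
(stated doubled), every feasible partition of `n` with `m` parts satisfies
`R_(m-1) ≤ ⌊(2n + 3^(m-2) - 1) / 4⌋`. -/
theorem penultimate_partial_sum_le_floor (m n : ℕ) (hm : 2 ≤ m)
    (h1 : 3 ^ (m - 1) + 1 ≤ 2 * n) (h2 : 2 * n ≤ 3 ^ (m - 1) + 1 + 2 * 3 ^ (m - 2)) :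
    ∀ w : ℕ → ℕ, IsFeasible n m w →
      ((∑ j ∈ Finset.range (m - 1), w j : ℕ) : ℤ) ≤
        ⌊(2 * (n : ℚ) + 3 ^ (m - 2) - 1) / 4⌋ := by
  intro w hw
  obtain ⟨⟨hpos, hmono, hsum, hrep⟩, -⟩ := hw
  -- `R i` denotes the partial sum of the first `i` weights.
  -- Key downward induction: for `1 ≤ i ≤ m - 1`, every integer `s` with
  -- `R i - w i < s ≤ R i` is a signed sum of the first `i` weights.
  have key : ∀ t i, i + t + 1 = m → 1 ≤ i → ∀ s : ℤ,
      ((∑ j ∈ Finset.range i, w j : ℕ) : ℤ) - (w i : ℤ) < s →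
      s ≤ ((∑ j ∈ Finset.range i, w j : ℕ) : ℤ) →
      ∃ u : ℕ → ℤ, (∀ j, u j = -1 ∨ u j = 0 ∨ u j = 1) ∧
        s = ∑ j ∈ Finset.range i, u j * (w j : ℤ) := by
    intro t
    induction t with
    | zero =>
        intro i him h1i s hs1 hs2
        have him' : i + 1 = m := by omega
        set Ri : ℤ := ((∑ j ∈ Finset.range i, w j : ℕ) : ℤ) with hRi
        have hRnn : (0 : ℤ) ≤ Ri := by positivity
        have hwpos : (1 : ℤ) ≤ (w i : ℤ) := by
          exact_mod_cast hpos i (by omega)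
        -- k = s + w i lies in (R_{m-1}, n]
        have hk1 : 1 ≤ s + (w i : ℤ) := by linarith
        have hkn : s + (w i : ℤ) ≤ (n : ℤ) := by
          have : (∑ j ∈ Finset.range (i + 1), w j) = n := by rw [him']; exact hsum
          rw [Finset.sum_range_succ] at this
          have : ((∑ j ∈ Finset.range i, w j : ℕ) : ℤ) + (w i : ℤ) = (n : ℤ) := by
            exact_mod_cast congrArg (Nat.cast : ℕ → ℤ) this
          linarith
        obtain ⟨u, hu, hk⟩ := hrep (s + (w i : ℤ)) hk1 hkn
        rw [← him', Finset.sum_range_succ] at hk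
        have hA := abs_signed_sum_le w u hu i
        rw [abs_le] at hA
        rcases hu i with h | h | h
        · exfalso; rw [h] at hk; linarith [hA.2]
        · exfalso; rw [h] at hk; simp at hk; linarith [hA.2]
        · refine ⟨u, hu, ?_⟩
          rw [h] at hk
          linarith
    | succ t ih =>
        intro i him h1i s hs1 hs2
        set Ri : ℤ := ((∑ j ∈ Finset.range i, w j : ℕ) : ℤ) with hRi
        have hwpos : (1 : ℤ) ≤ (w i : ℤ) := by
          exact_mod_cast hpos i (by omega)
        have hwle : (w i : ℤ) ≤ (w (i + 1) : ℤ) := by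
          exact_mod_cast hmono i (i + 1) (by omega) (by omega)
        have hsucc : ((∑ j ∈ Finset.range (i + 1), w j : ℕ) : ℤ) = Ri + (w i : ℤ) := by
          rw [Finset.sum_range_succ, hRi]; push_cast; ring
        obtain ⟨u, hu, hk⟩ := ih (i + 1) (by omega) (by omega) (s + (w i : ℤ))
          (by rw [hsucc]; linarith) (by rw [hsucc]; linarith)
        rw [Finset.sum_range_succ] at hk
        have hA := abs_signed_sum_le w u hu i
        rw [abs_le] at hA
        rcases hu i with h | h | h
        · exfalso; rw [h] at hk; linarith [hA.2]
        · exfalso; rw [h] at hk; simp at hk; linarith [hA.2]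
        · refine ⟨u, hu, ?_⟩
          rw [h] at hk
          linarith
  have P : ∀ i, 1 ≤ i → i < m → ∀ s : ℤ,
      ((∑ j ∈ Finset.range i, w j : ℕ) : ℤ) - (w i : ℤ) < s →
      s ≤ ((∑ j ∈ Finset.range i, w j : ℕ) : ℤ) →
      ∃ u : ℕ → ℤ, (∀ j, u j = -1 ∨ u j = 0 ∨ u j = 1) ∧
        s = ∑ j ∈ Finset.range i, u j * (w j : ℤ) := by
    intro i h1 h2
    exact key (m - i - 1) i (by omega) h1
  -- The first weight is 1.
  have hw0 : w 0 = 1 := by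
    have h0 : 1 ≤ w 0 := hpos 0 (by omega)
    have h01 : w 0 ≤ w 1 := hmono 0 1 (by omega) (by omega)
    by_cases hc : w 1 = 1
    · omega
    · have hw1 : 2 ≤ w 1 := by
        have := hpos 1 (by omega); omega
      obtain ⟨u, hu, hsu⟩ := P 1 le_rfl (by omega) ((w 0 : ℤ) - 1)
        (by rw [Finset.sum_range_one]; push_cast
            have : (2 : ℤ) ≤ (w 1 : ℤ) := by exact_mod_cast hw1
            linarith)
        (by rw [Finset.sum_range_one]; push_cast; linarith)
      rw [Finset.sum_range_one] at hsu
      have h0' : (1 : ℤ) ≤ (w 0 : ℤ) := by exact_mod_cast h0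
      rcases hu 0 with h | h | h <;> rw [h] at hsu
      · exfalso; linarith
      · simp at hsu
        have : (w 0 : ℤ) = 1 := by linarith
        exact_mod_cast this
      · exfalso; linarith
  -- The bound w i ≤ 2 R i + 1 for i < m.
  have hwle : ∀ i, i < m - 1 → w i ≤ 2 * (∑ j ∈ Finset.range i, w j) + 1 := by
    intro i hi
    rcases Nat.eq_zero_or_pos i with h0 | h1
    · subst h0; simp [hw0]
    · have hwpos : (1 : ℤ) ≤ (w i : ℤ) := by exact_mod_cast hpos i (by omega)
      obtain ⟨u, hu, hsu⟩ := P i h1 (by omega)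
        (((∑ j ∈ Finset.range i, w j : ℕ) : ℤ) - (w i : ℤ) + 1)
        (by linarith) (by linarith)
      have hA := abs_signed_sum_le w u hu i
      rw [← hsu, abs_le] at hA
      have : (w i : ℤ) ≤ 2 * ((∑ j ∈ Finset.range i, w j : ℕ) : ℤ) + 1 := by
        linarith [hA.1]
      exact_mod_cast this
  -- Hence 2 R i + 1 ≤ 3 ^ i for i ≤ m - 2.
  have hQ : ∀ i, i ≤ m - 2 → 2 * (∑ j ∈ Finset.range i, w j) + 1 ≤ 3 ^ i := by
    intro i
    induction i with
    | zero => simp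
    | succ i ih =>
        intro hi
        have hih := ih (by omega)
        have hwi := hwle i (by omega)
        rw [Finset.sum_range_succ]
        have h3 : 3 * (2 * (∑ j ∈ Finset.range i, w j) + 1) ≤ 3 * 3 ^ i := by omega
        calc 2 * ((∑ j ∈ Finset.range i, w j) + w i) + 1
            ≤ 3 * (2 * (∑ j ∈ Finset.range i, w j) + 1) := by omega
          _ ≤ 3 * 3 ^ i := h3
          _ = 3 ^ (i + 1) := by ring
  -- Assemble the pieces.
  have e1 : (∑ j ∈ Finset.range (m - 1), w j) + w (m - 1) = n := by
    have h := Finset.sum_range_succ w (m - 1)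
    rw [show m - 1 + 1 = m from by omega] at h
    omega
  have e2 : (∑ j ∈ Finset.range (m - 1), w j)
      = (∑ j ∈ Finset.range (m - 2), w j) + w (m - 2) := by
    have h := Finset.sum_range_succ w (m - 2)
    rw [show m - 2 + 1 = m - 1 from by omega] at h
    exact h
  have e3 : w (m - 2) ≤ w (m - 1) := hmono (m - 2) (m - 1) (by omega) (by omega)
  have e4 : 2 * (∑ j ∈ Finset.range (m - 2), w j) + 1 ≤ 3 ^ (m - 2) := hQ _ le_rfl
  have main : 4 * (∑ j ∈ Finset.range (m - 1), w j) + 1 ≤ 2 * n + 3 ^ (m - 2) := by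
    omega
  rw [Int.le_floor]
  rw [le_div_iff₀ (by norm_num : (0 : ℚ) < 4)]
  have hc : ((4 * (∑ j ∈ Finset.range (m - 1), w j) + 1 : ℕ) : ℚ)
      ≤ ((2 * n + 3 ^ (m - 2) : ℕ) : ℚ) := Nat.cast_le.mpr main
  push_cast at hc ⊢
  linarith
end

section
/- Let m ≥ 2 and let n be an integer with (3^{m−1} + 1)/2 ≤ n ≤ (3^{m−1} + 1)/2 + 3^{m−2}. Then there exists a feasible partition w_1 ≤ … ≤ w_m of n with R_{m−1} = w_1 + … + w_{m−1} = ⌊(2n + 3^{m−2} − 1)/4⌋; that is, the upper bound ⌊(2n + 3^{m−2} − 1)/4⌋ for R_{m−1} is attained. -/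
private lemma geom3 (k : ℕ) : 2 * (∑ i ∈ Finset.range k, 3 ^ i) + 1 = 3 ^ k := by
  induction k with
  | zero => simp
  | succ k ih => rw [Finset.sum_range_succ, pow_succ]; omega

private lemma chain_mono (w : ℕ → ℕ) (m : ℕ) (h : ∀ i, i + 1 < m → w i ≤ w (i + 1)) :
    ∀ i j, i ≤ j → j < m → w i ≤ w j := by
  intro i j hij hjm
  induction j with
  | zero =>
    have : i = 0 := by omega
    simp [this]
  | succ j ih =>
    rcases Nat.lt_or_ge i (j + 1) with h' | h'
    · exact le_trans (ih (by omega) (by omega)) (h j hjm)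
    · have : i = j + 1 := by omega
      simp [this]

private lemma cover (w : ℕ → ℕ) :
    ∀ m : ℕ, (∀ i, i < m → w i ≤ 2 * (∑ j ∈ Finset.range i, w j) + 1) →
    ∀ k : ℤ, |k| ≤ ((∑ i ∈ Finset.range m, w i : ℕ) : ℤ) →
    ∃ u : ℕ → ℤ, (∀ i, u i = -1 ∨ u i = 0 ∨ u i = 1) ∧
      k = ∑ i ∈ Finset.range m, u i * (w i : ℤ) := by
  intro m
  induction m with
  | zero =>
    intro _ k hk
    refine ⟨fun _ => 0, fun _ => Or.inr (Or.inl rfl), ?_⟩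
    simp only [Finset.range_zero, Finset.sum_empty, Nat.cast_zero] at hk ⊢
    have := abs_nonneg k
    have hk0 : |k| = 0 := le_antisymm hk this
    simpa [abs_eq_zero] using hk0
  | succ m ih =>
    intro hcond k hk
    have hw : (w m : ℤ) ≤ 2 * ((∑ j ∈ Finset.range m, w j : ℕ) : ℤ) + 1 := by
      exact_mod_cast hcond m (by omega)
    rw [Finset.sum_range_succ, Nat.cast_add, abs_le] at hk
    obtain ⟨c, hc1, hk'⟩ : ∃ c : ℤ, (c = -1 ∨ c = 0 ∨ c = 1) ∧
        |k - c * (w m : ℤ)| ≤ ((∑ i ∈ Finset.range m, w i : ℕ) : ℤ) := by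
      rcases le_or_gt k ((∑ i ∈ Finset.range m, w i : ℕ) : ℤ) with h1 | h1
      · rcases le_or_gt (-((∑ i ∈ Finset.range m, w i : ℕ) : ℤ)) k with h2 | h2
        · refine ⟨0, Or.inr (Or.inl rfl), ?_⟩
          rw [abs_le]
          constructor <;> omega
        · refine ⟨-1, Or.inl rfl, ?_⟩
          rw [abs_le]
          constructor <;> omega
      · refine ⟨1, Or.inr (Or.inr rfl), ?_⟩
        rw [abs_le]
        constructor <;> omega
    obtain ⟨u, hu1, hu2⟩ := ih (fun i hi => hcond i (by omega)) (k - c * w m) hk'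
    refine ⟨Function.update u m c, ?_, ?_⟩
    · intro i
      rcases eq_or_ne i m with rfl | hne
      · simpa using hc1
      · simpa [Function.update_of_ne hne] using hu1 i
    · rw [Finset.sum_range_succ, Function.update_self]
      have heq : ∑ i ∈ Finset.range m, Function.update u m c i * (w i : ℤ)
          = ∑ i ∈ Finset.range m, u i * (w i : ℤ) := by
        refine Finset.sum_congr rfl fun i hi => ?_
        rw [Function.update_of_ne (by simp at hi; omega)]
      rw [heq, ← hu2]; ring

private lemma weighing_length (n m' : ℕ) (w : ℕ → ℕ) (h : IsWeighingSeq n m' w) :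
    2 * n + 1 ≤ 3 ^ m' := by
  classical
  obtain ⟨hpos, hmono, hsum, hrep⟩ := h
  have hrep' : ∀ k : ℤ, k ∈ Finset.Icc (-(n : ℤ)) n → ∃ u : ℕ → ℤ,
      (∀ i, u i = -1 ∨ u i = 0 ∨ u i = 1) ∧ k = ∑ i ∈ Finset.range m', u i * (w i : ℤ) := by
    intro k hk
    simp only [Finset.mem_Icc] at hk
    rcases lt_trichotomy k 0 with h0 | h0 | h0
    · obtain ⟨u, hu1, hu2⟩ := hrep (-k) (by omega) (by omega)
      refine ⟨fun i => -(u i), fun i => by rcases hu1 i with h | h | h <;> simp [h], ?_⟩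
      have : ∑ i ∈ Finset.range m', -u i * (w i : ℤ)
          = -∑ i ∈ Finset.range m', u i * (w i : ℤ) := by
        simp [neg_mul, Finset.sum_neg_distrib]
      rw [this, ← hu2]; ring
    · exact ⟨fun _ => 0, fun _ => Or.inr (Or.inl rfl), by simp [h0]⟩
    · exact hrep k (by omega) (by omega)
  have hrep'' : ∀ k : ℤ, ∃ u : ℕ → ℤ, k ∈ Finset.Icc (-(n : ℤ)) n →
      ((∀ i, u i = -1 ∨ u i = 0 ∨ u i = 1) ∧
        k = ∑ i ∈ Finset.range m', u i * (w i : ℤ)) := by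
    intro k
    by_cases hk : k ∈ Finset.Icc (-(n : ℤ)) n
    · obtain ⟨u, hu⟩ := hrep' k hk; exact ⟨u, fun _ => hu⟩
    · exact ⟨fun _ => 0, fun hx => absurd hx hk⟩
  have key : (Finset.Icc (-(n : ℤ)) n).card ≤
      (Fintype.piFinset (fun _ : Fin m' => ({-1, 0, 1} : Finset ℤ))).card := by
    apply Finset.card_le_card_of_injOn
      (fun k => (fun i : Fin m' => (hrep'' k).choose i))
    · intro k hk
      obtain ⟨hu1, -⟩ := (hrep'' k).choose_spec hk
      rw [Finset.mem_coe, Fintype.mem_piFinset]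
      intro i
      rcases hu1 i with h | h | h <;> simp [h]
    · intro k1 h1 k2 h2 hE
      simp only [Finset.mem_coe] at h1 h2
      obtain ⟨-, he1⟩ := (hrep'' k1).choose_spec h1
      obtain ⟨-, he2⟩ := (hrep'' k2).choose_spec h2
      rw [he1, he2, Finset.sum_range, Finset.sum_range]
      exact Finset.sum_congr rfl fun i _ =>
        congrArg (fun x : ℤ => x * ((w (i : ℕ) : ℤ))) (congrFun hE i)
  rw [Int.card_Icc, Fintype.card_piFinset] at key
  have hc3 : ({-1, 0, 1} : Finset ℤ).card = 3 := by decide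
  simp only [hc3, Finset.prod_const, Finset.card_univ, Fintype.card_fin] at key
  omega

/-- For `m ≥ 2` and `(3^(m-1) + 1)/2 ≤ n ≤ (3^(m-1) + 1)/2 + 3^(m-2)`
(stated doubled), there is a feasible partition of `n` (with `m` parts)
attaining the upper bound `R_(m-1) = ⌊(2n + 3^(m-2) - 1) / 4⌋`. -/
theorem exists_feasible_with_max_penultimate_sum (m n : ℕ) (hm : 2 ≤ m)
    (h1 : 3 ^ (m - 1) + 1 ≤ 2 * n) (h2 : 2 * n ≤ 3 ^ (m - 1) + 1 + 2 * 3 ^ (m - 2)) :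
    ∃ w : ℕ → ℕ, IsFeasible n m w ∧
      ((∑ j ∈ Finset.range (m - 1), w j : ℕ) : ℤ) =
        ⌊(2 * (n : ℚ) + 3 ^ (m - 2) - 1) / 4⌋ := by
  classical
  set S : ℕ := ∑ i ∈ Finset.range (m - 2), 3 ^ i with hSdef
  have hS : 2 * S + 1 = 3 ^ (m - 2) := geom3 (m - 2)
  have h31 : 3 ^ (m - 1) = 3 * 3 ^ (m - 2) := by
    rw [← pow_succ']
    congr 1
    omega
  set R : ℕ := (2 * n + 2 * S) / 4 with hRdef
  have hRdm := Nat.div_add_mod (2 * n + 2 * S) 4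
  have hRmlt : (2 * n + 2 * S) % 4 < 4 := Nat.mod_lt _ (by norm_num)
  rw [h31, ← hS] at h1 h2
  -- key numeric facts
  have hRS : S + 1 ≤ R := by omega
  have hRn : R < n := by omega
  have hRub : R ≤ 3 * S + 1 := by omega
  have hn3R : n ≤ 3 * R + 1 := by omega
  have h2Rn : 2 * R ≤ n + S := by omega
  set w : ℕ → ℕ := fun i => if i < m - 2 then 3 ^ i else if i = m - 2 then R - S else n - R
    with hwdef
  have hwlt : ∀ i, i < m - 2 → w i = 3 ^ i := fun i hi => by simp [hwdef, hi]
  have hwm2 : w (m - 2) = R - S := by simp [hwdef]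
  have hwm1 : w (m - 1) = n - R := by
    have h1' : ¬ (m - 1 < m - 2) := by omega
    have h2' : ¬ (m - 1 = m - 2) := by omega
    simp [hwdef, h1', h2']
  have hsum2 : ∑ i ∈ Finset.range (m - 2), w i = S := by
    rw [hSdef]
    exact Finset.sum_congr rfl fun i hi => hwlt i (Finset.mem_range.mp hi)
  have hsumpart : ∑ i ∈ Finset.range (m - 1), w i = R := by
    have hm1 : m - 1 = (m - 2) + 1 := by omega
    rw [hm1, Finset.sum_range_succ, hsum2, hwm2]
    omega
  have hsumall : ∑ i ∈ Finset.range m, w i = n := by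
    have hm1 : m = (m - 1) + 1 := by omega
    rw [hm1, Finset.sum_range_succ, hsumpart, hwm1]
    omega
  have hcond : ∀ i, i < m → w i ≤ 2 * (∑ j ∈ Finset.range i, w j) + 1 := by
    intro i hi
    rcases lt_trichotomy i (m - 2) with hi' | hi' | hi'
    · rw [hwlt i hi']
      have : ∑ j ∈ Finset.range i, w j = ∑ j ∈ Finset.range i, 3 ^ j :=
        Finset.sum_congr rfl fun j hj => hwlt j (by have := Finset.mem_range.mp hj; omega)
      rw [this]
      have := geom3 i
      omega
    · subst hi'
      rw [hwm2, hsum2]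
      omega
    · have : i = m - 1 := by omega
      subst this
      rw [hwm1, hsumpart]
      omega
  have hRS2 : 2 * S + 1 ≤ R := by omega
  refine ⟨w, ⟨⟨?_, ?_, hsumall, ?_⟩, ?_⟩, ?_⟩
  · -- positivity
    intro i hi
    rcases lt_trichotomy i (m - 2) with hi' | hi' | hi'
    · rw [hwlt i hi']; positivity
    · subst hi'; rw [hwm2]; omega
    · have : i = m - 1 := by omega
      subst this; rw [hwm1]; omega
  · -- monotone
    refine chain_mono w m ?_
    intro i hi
    rcases lt_trichotomy (i + 1) (m - 2) with hi' | hi' | hi'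
    · rw [hwlt i (by omega), hwlt (i + 1) hi']
      exact Nat.pow_le_pow_right (by norm_num) (by omega)
    · have hi3 : i = m - 3 := by omega
      have hm3 : 3 ≤ m := by omega
      subst hi3
      have hp : 3 ^ (m - 2) = 3 * 3 ^ (m - 3) := by
        rw [← pow_succ']; congr 1; omega
      have hS' : 2 * S + 1 = 3 * 3 ^ (m - 3) := by rw [hS, hp]
      rw [show m - 3 + 1 = m - 2 from by omega, hwm2, hwlt (m - 3) (by omega)]
      omega
    · have hieq : i = m - 2 := by omega
      subst hieq
      rw [show m - 2 + 1 = m - 1 from by omega, hwm1, hwm2]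
      omega
  · -- representation
    intro k hk1 hk2
    refine cover w m hcond k ?_
    rw [hsumall, abs_le]
    constructor <;> omega
  · -- minimality
    intro m' w' hw'
    have hlen := weighing_length n m' w' hw'
    have hlt : 3 ^ (m - 1) < 3 ^ m' := by rw [h31, ← hS]; omega
    have := (pow_lt_pow_iff_right₀ (by norm_num : (1:ℕ) < 3)).mp hlt
    omega
  · -- floor value
    rw [hsumpart]
    have hq : (2 * (n : ℚ) + 3 ^ (m - 2) - 1) = ((2 * n + 2 * S : ℕ) : ℚ) := by
      have h3 : ((3 : ℚ)) ^ (m - 2) = ((3 ^ (m - 2) : ℕ) : ℚ) := by push_cast; ring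
      rw [h3, ← hS]; push_cast; ring
    rw [hq]
    symm
    rw [Int.floor_eq_iff]
    constructor
    · rw [le_div_iff₀ (by norm_num : (0:ℚ) < 4)]
      have : (R : ℚ) * 4 ≤ ((2 * n + 2 * S : ℕ) : ℚ) := by
        exact_mod_cast (show R * 4 ≤ 2 * n + 2 * S by omega)
      exact_mod_cast this
    · rw [div_lt_iff₀ (by norm_num : (0:ℚ) < 4)]
      have : ((2 * n + 2 * S : ℕ) : ℚ) < ((R : ℚ) + 1) * 4 := by
        exact_mod_cast (show 2 * n + 2 * S < (R + 1) * 4 by omega)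
      exact_mod_cast this
end

section
/- Let m ≥ 2 and let n be an integer with (3^{m−1} + 1)/2 + 3^{m−2} + 1 ≤ n ≤ (3^m − 1)/2 (so every feasible partition of n has m parts). Then every feasible partition w_1 ≤ … ≤ w_m of n satisfies R_{m−1} = w_1 + … + w_{m−1} ≤ (3^{m−1} − 1)/2. -/
lemma weighing_key (n m : ℕ) (w : ℕ → ℕ) (hw : IsWeighingSeq n m w) :
    ∀ j, j < m → w j ≤ 2 * (∑ i ∈ Finset.range j, w i) + 1 := by
  obtain ⟨hpos, hmono, hsum, hrep⟩ := hw
  intro j hj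
  by_contra hcon
  push_neg at hcon
  set S := ∑ i ∈ Finset.range j, w i with hS
  have hsplit : S + (∑ i ∈ Finset.Ico j m, w i) = n := by
    rw [hS, Finset.sum_range_add_sum_Ico w (le_of_lt hj), hsum]
  have hwjle : w j ≤ ∑ i ∈ Finset.Ico j m, w i := by
    apply Finset.single_le_sum (f := w) (fun i _ => Nat.zero_le _)
    simp [Finset.mem_Ico, hj]
  have hn1 : 3 * S + 2 ≤ n := by omega
  obtain ⟨u, hu, hk⟩ := hrep ((n : ℤ) - 2 * S - 1) (by omega) (by omega)
  rw [← Finset.sum_range_add_sum_Ico _ (le_of_lt hj)] at hk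
  set s := ∑ i ∈ Finset.range j, u i * (w i : ℤ) with hsdef
  set T := ∑ i ∈ Finset.Ico j m, u i * (w i : ℤ) with hTdef
  have hScast : (S : ℤ) = ∑ i ∈ Finset.range j, (w i : ℤ) := by
    rw [hS]; push_cast; ring
  have hs_le : s ≤ (S : ℤ) := by
    rw [hScast]
    apply Finset.sum_le_sum
    intro i _
    rcases hu i with h | h | h <;> simp [h]
  have hs_ge : -(S : ℤ) ≤ s := by
    rw [hScast, ← Finset.sum_neg_distrib]
    apply Finset.sum_le_sum
    intro i _
    rcases hu i with h | h | h <;> simp [h]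
  have hT0cast : ((∑ i ∈ Finset.Ico j m, w i : ℕ) : ℤ) = ∑ i ∈ Finset.Ico j m, (w i : ℤ) := by
    push_cast; ring
  set T0 : ℤ := ∑ i ∈ Finset.Ico j m, (w i : ℤ) with hT0def
  have hT0 : (S : ℤ) + T0 = (n : ℤ) := by
    rw [← hT0cast]; exact_mod_cast congrArg (Nat.cast : ℕ → ℤ) hsplit
  have hT_le : T ≤ (n : ℤ) - S - 1 := by omega
  have hT_ge : (n : ℤ) - 3 * S - 1 ≤ T := by omega
  -- some tail coefficient is ≤ 0
  have hex : ∃ i0 ∈ Finset.Ico j m, u i0 * (w i0 : ℤ) < (w i0 : ℤ) := by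
    by_contra h2
    push_neg at h2
    have : T0 ≤ T := Finset.sum_le_sum h2
    omega
  obtain ⟨i0, hi0mem, hi0⟩ := hex
  have hi0' := Finset.mem_Ico.mp hi0mem
  have hnonpos : u i0 * (w i0 : ℤ) ≤ 0 := by
    rcases hu i0 with h | h | h <;> simp [h] at hi0 ⊢
  have hwj_le_wi0 : (w j : ℤ) ≤ (w i0 : ℤ) := by
    exact_mod_cast hmono j i0 hi0'.1 hi0'.2
  have hTsplit : T = u i0 * (w i0 : ℤ) + ∑ i ∈ (Finset.Ico j m).erase i0, u i * (w i : ℤ) := by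
    rw [hTdef, ← Finset.add_sum_erase _ _ hi0mem]
  have herase_le : ∑ i ∈ (Finset.Ico j m).erase i0, u i * (w i : ℤ)
      ≤ ∑ i ∈ (Finset.Ico j m).erase i0, (w i : ℤ) := by
    apply Finset.sum_le_sum
    intro i _
    rcases hu i with h | h | h <;> simp [h]
  have herase : ∑ i ∈ (Finset.Ico j m).erase i0, (w i : ℤ) = T0 - (w i0 : ℤ) := by
    rw [hT0def, ← Finset.add_sum_erase _ _ hi0mem]; ring
  have hwjZ : 2 * (S : ℤ) + 2 ≤ (w j : ℤ) := by omega
  linarith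

lemma weighing_partial_sum_bound (n m : ℕ) (w : ℕ → ℕ) (hw : IsWeighingSeq n m w) :
    ∀ j, j ≤ m → 2 * (∑ i ∈ Finset.range j, w i) + 1 ≤ 3 ^ j := by
  intro j
  induction j with
  | zero => simp
  | succ j ih =>
    intro hj
    have h1 := ih (by omega)
    have h2 := weighing_key n m w hw j (by omega)
    rw [Finset.sum_range_succ]
    have h3 : (3 : ℕ) ^ (j + 1) = 3 * 3 ^ j := by ring
    omega

/-- For `m ≥ 2` and `(3^(m-1) + 1)/2 + 3^(m-2) + 1 ≤ n ≤ (3^m - 1)/2`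
(stated doubled), every feasible partition of `n` with `m` parts satisfies
`R_(m-1) ≤ (3^(m-1) - 1) / 2` (stated as `2 * R_(m-1) ≤ 3^(m-1) - 1`). -/
theorem penultimate_partial_sum_le_in_upper_span (m n : ℕ) (hm : 2 ≤ m)
    (h1 : 3 ^ (m - 1) + 2 * 3 ^ (m - 2) + 3 ≤ 2 * n) (h2 : 2 * n ≤ 3 ^ m - 1) :
    ∀ w : ℕ → ℕ, IsFeasible n m w →
      2 * (∑ j ∈ Finset.range (m - 1), w j) ≤ 3 ^ (m - 1) - 1 := by
  intro w hw
  have h := weighing_partial_sum_bound n m w hw.1 (m - 1) (by omega)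
  omega
end

section
/- Let m ≥ 2 and let n be an integer with (3^{m−1} + 1)/2 + 3^{m−2} + 1 ≤ n ≤ (3^m − 1)/2. Then the list 3^0, 3^1, …, 3^{m−2}, n − (3^{m−1} − 1)/2 is a feasible partition of n (an m-part weighing sequence for n of minimal length) whose first m − 1 parts sum to R_{m−1} = (3^{m−1} − 1)/2; that is, the upper bound (3^{m−1} − 1)/2 for R_{m−1} is attained. -/
def Sb : ℕ → ℕ
  | 0 => 0
  | n+1 => 3 * Sb n + 1

lemma Sb_eq (m : ℕ) : 2 * Sb m + 1 = 3 ^ m := by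
  induction m with
  | zero => rfl
  | succ n ih => simp only [Sb, pow_succ]; omega

lemma Sb_sum (m : ℕ) : ∑ i ∈ Finset.range m, 3 ^ i = Sb m := by
  induction m with
  | zero => rfl
  | succ n ih =>
    rw [Finset.sum_range_succ, ih]
    have := Sb_eq n
    simp only [Sb]; omega

lemma bt (m : ℕ) : ∀ k : ℤ, |k| ≤ (Sb m : ℤ) → ∃ u : ℕ → ℤ,
    (∀ i, u i = -1 ∨ u i = 0 ∨ u i = 1) ∧ k = ∑ i ∈ Finset.range m, u i * 3 ^ i := by
  induction m with
  | zero =>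
    intro k hk
    simp only [Sb, Nat.cast_zero] at hk
    refine ⟨fun _ => 0, fun _ => Or.inr (Or.inl rfl), ?_⟩
    simp only [Finset.range_zero, Finset.sum_empty]
    rw [abs_le] at hk; omega
  | succ n ih =>
    intro k hk
    set c : ℤ := if (Sb n : ℤ) < k then 1 else if k < -(Sb n : ℤ) then -1 else 0 with hc
    have h3 : (3 : ℤ) ^ n = 2 * Sb n + 1 := by exact_mod_cast (Sb_eq n).symm
    have hS : ((Sb (n+1) : ℕ) : ℤ) = 3 * Sb n + 1 := by
      show ((3 * Sb n + 1 : ℕ) : ℤ) = _; push_cast; ring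
    have hk' : |k - c * 3 ^ n| ≤ (Sb n : ℤ) := by
      rw [abs_le] at hk ⊢
      rw [hS] at hk
      rw [hc]
      split_ifs <;> omega
    obtain ⟨u, hu, he⟩ := ih _ hk'
    refine ⟨fun i => if i = n then c else u i, ?_, ?_⟩
    · intro i
      by_cases h : i = n
      · simp only [h, if_pos rfl, hc]; split_ifs <;> simp
      · simp only [if_neg h]; exact hu i
    · rw [Finset.sum_range_succ]
      simp only [if_pos rfl]
      have heq : ∑ i ∈ Finset.range n, (if i = n then c else u i) * 3 ^ i
          = ∑ i ∈ Finset.range n, u i * 3 ^ i := by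
        apply Finset.sum_congr rfl
        intro i hi
        rw [if_neg (Finset.mem_range.mp hi).ne]
      rw [heq, ← he]; simp only [if_true]; ring

/-- For `m ≥ 2` and `(3^(m-1) + 1)/2 + 3^(m-2) + 1 ≤ n ≤ (3^m - 1)/2`
(stated doubled), the list `3^0, 3^1, …, 3^(m-2), n - (3^(m-1) - 1)/2` is a
feasible partition of `n` with `m` parts whose first `m - 1` parts sum to
`R_(m-1) = (3^(m-1) - 1) / 2`; so the upper bound is attained. -/
theorem powers_then_rest_is_feasible (m n : ℕ) (hm : 2 ≤ m)
    (h1 : 3 ^ (m - 1) + 2 * 3 ^ (m - 2) + 3 ≤ 2 * n) (h2 : 2 * n ≤ 3 ^ m - 1) :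
    IsFeasible n m (fun i => if i < m - 1 then 3 ^ i else n - (3 ^ (m - 1) - 1) / 2) ∧
      (∑ j ∈ Finset.range (m - 1),
        (fun i => if i < m - 1 then 3 ^ i else n - (3 ^ (m - 1) - 1) / 2) j) =
        (3 ^ (m - 1) - 1) / 2 := by
  obtain ⟨q, rfl⟩ : ∃ q, m = q + 2 := ⟨m - 2, by omega⟩
  simp only [Nat.add_sub_cancel] at *
  have hq1 : q + 2 - 1 = q + 1 := by omega
  rw [hq1] at h1 ⊢
  have hS1 : 2 * Sb (q+1) + 1 = 3 ^ (q+1) := Sb_eq (q+1)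
  have hS2 : 2 * Sb (q+2) + 1 = 3 ^ (q+2) := Sb_eq (q+2)
  have hSq : 2 * Sb q + 1 = 3 ^ q := Sb_eq q
  have hS12 : Sb (q+2) = 3 * Sb (q+1) + 1 := rfl
  have hdiv : (3 ^ (q+1) - 1) / 2 = Sb (q+1) := by omega
  rw [hdiv]
  have hn1 : Sb (q+1) + 3 ^ q + 2 ≤ n := by omega
  have hn2 : n ≤ 3 * Sb (q+1) + 1 := by omega
  have hq0 : Sb q + 3 ^ q = Sb (q + 1) := by omega
  have hsum1 : (∑ j ∈ Finset.range (q + 1),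
      (fun i => if i < q + 1 then 3 ^ i else n - Sb (q+1)) j) = Sb (q+1) := by
    rw [← Sb_sum (q+1)]
    apply Finset.sum_congr rfl
    intro i hi
    simp only [if_pos (Finset.mem_range.mp hi)]
  have hcast : ((n - Sb (q+1) : ℕ) : ℤ) = (n : ℤ) - Sb (q+1) := by
    rw [Nat.cast_sub]; omega
  constructor
  · constructor
    · refine ⟨?_, ?_, ?_, ?_⟩
      · intro i _
        by_cases h : i < q + 1
        · simp only [if_pos h]; positivity
        · simp only [if_neg h]; omega
      · intro i j hij hj
        by_cases hj' : j < q + 1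
        · have hi' : i < q + 1 := lt_of_le_of_lt hij hj'
          simp only [if_pos hi', if_pos hj']
          exact Nat.pow_le_pow_right (by norm_num) hij
        · by_cases hi' : i < q + 1
          · simp only [if_pos hi', if_neg hj']
            have : 3 ^ i ≤ 3 ^ q := Nat.pow_le_pow_right (by norm_num) (by omega)
            omega
          · simp only [if_neg hi', if_neg hj']; exact le_refl _
      · rw [Finset.sum_range_succ, hsum1]
        simp only [lt_irrefl, if_false]
        omega
      · intro k hk1 hk2
        have key : ∀ (u : ℕ → ℤ) (c : ℤ),
            ∑ i ∈ Finset.range (q+2), (if i < q + 1 then u i else c) *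
              (((fun i => if i < q + 1 then 3 ^ i else n - Sb (q+1)) i : ℕ) : ℤ)
            = (∑ i ∈ Finset.range (q+1), u i * 3 ^ i) + c * ((n : ℤ) - Sb (q+1)) := by
          intro u c
          rw [Finset.sum_range_succ]
          simp only [lt_irrefl, if_false, hcast]
          congr 1
          apply Finset.sum_congr rfl
          intro i hi
          have hi' := Finset.mem_range.mp hi
          simp only [if_pos hi']
          push_cast
          ring
        by_cases hk : k ≤ (Sb (q+1) : ℤ)
        · obtain ⟨u, hu, he⟩ := bt (q+1) k (by rw [abs_le]; omega)
          refine ⟨fun i => if i < q + 1 then u i else 0, ?_, ?_⟩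
          · intro i; dsimp only; split_ifs with h
            · exact hu i
            · exact Or.inr (Or.inl rfl)
          · rw [key u 0, ← he]; ring
        · obtain ⟨u, hu, he⟩ := bt (q+1) (k - ((n:ℤ) - Sb (q+1))) (by rw [abs_le]; push_neg at hk; omega)
          refine ⟨fun i => if i < q + 1 then u i else 1, ?_, ?_⟩
          · intro i; dsimp only; split_ifs with h
            · exact hu i
            · exact Or.inr (Or.inr rfl)
          · rw [key u 1, ← he]; ring
    · intro m' w' hw'
      by_contra hlt
      push_neg at hlt
      have hm' : m' ≤ q + 1 := by omega
      obtain ⟨hpos, hmono, hsum, hrep⟩ := hw'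
      have hrep' : ∀ k : ℤ, ∃ u : ℕ → ℤ, (∀ i, u i = -1 ∨ u i = 0 ∨ u i = 1) ∧
          (k ∈ Finset.Icc (-(n:ℤ)) n → k = ∑ i ∈ Finset.range m', u i * (w' i : ℤ)) := by
        intro k
        by_cases hk : k ∈ Finset.Icc (-(n:ℤ)) n
        · rw [Finset.mem_Icc] at hk
          rcases lt_trichotomy k 0 with h | h | h
          · obtain ⟨u, hu, he⟩ := hrep (-k) (by omega) (by omega)
            refine ⟨fun i => -u i, fun i => by rcases hu i with h' | h' | h' <;> simp [h'], ?_⟩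
            intro _
            have hk2 : k = -(-k) := by ring
            rw [hk2, he, ← Finset.sum_neg_distrib]
            exact Finset.sum_congr rfl fun i _ => by ring
          · exact ⟨fun _ => 0, fun _ => Or.inr (Or.inl rfl), fun _ => by simp [h]⟩
          · obtain ⟨u, hu, he⟩ := hrep k (by omega) (by omega)
            exact ⟨u, hu, fun _ => he⟩
        · exact ⟨fun _ => 0, fun _ => Or.inr (Or.inl rfl), fun h => absurd h hk⟩
      choose F hF1 hF2 using hrep'
      have hcard : (Finset.Icc (-(n:ℤ)) n).card ≤
          (Fintype.piFinset (fun _ : Fin m' => ({-1,0,1} : Finset ℤ))).card := by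
        apply Finset.card_le_card_of_injOn (fun k => fun i : Fin m' => F k i)
        · intro k _
          rw [Finset.mem_coe, Fintype.mem_piFinset]
          intro i
          rcases hF1 k i with h | h | h <;> simp [h]
        · intro k1 hk1 k2 hk2 hEq
          have e1 := hF2 k1 hk1
          have e2 := hF2 k2 hk2
          rw [e1, e2]
          apply Finset.sum_congr rfl
          intro i hi
          have : F k1 i = F k2 i := congrFun hEq ⟨i, Finset.mem_range.mp hi⟩
          rw [this]
      rw [Fintype.card_piFinset] at hcard
      simp only [Finset.prod_const, Finset.card_univ, Fintype.card_fin] at hcard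
      have hc3 : ({-1,0,1} : Finset ℤ).card = 3 := by decide
      rw [hc3] at hcard
      rw [Int.card_Icc] at hcard
      have h3le : (3:ℕ) ^ m' ≤ 3 ^ (q+1) := Nat.pow_le_pow_right (by norm_num) hm'
      have htn : ((n:ℤ) + 1 - (-(n:ℤ))).toNat = 2 * n + 1 := by omega
      omega
  · exact hsum1
end
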